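/- arXiv:1305.2497 — 2 statements merged into one kernel-verified Lean document; each statement's English description precedes it below -/
import Mathlib

section
/- Fix 1 < p < ∞, C* ≥ 1 and Ĉ ≥ 1. Then there exists σ₂ > 0, depending only on p and C*, with the following property. Let (V, ≤) be a finite rooted tree of maximal depth N with ψ : ℕ → [0, ∞) increasing, ψ(0) = 0, satisfying: card V_{j−j₀}(ξ) ≤ C* 2^{ψ(j)−ψ(j₀)} for all j₀ ≤ j and ξ of depth j₀; every vertex has at most Ĉ immediate successors; the weights are level-constant, u(ξ) = u_{|ξ|} > 0, w(ξ) = w_{|ξ|} > 0, with Ĉ⁻¹ ≤ u_j/u_{j+1} ≤ Ĉ and Ĉ⁻¹ ≤ w_j/w_{j+1} ≤ Ĉ for all j; and for some σ ∈ (0, σ₂): u_j 2^{−ψ(j)/p} ≥ σ^{−1/p'} u_{j−1} 2^{−ψ(j−1)/p} and w_j 2^{ψ(j)/p} ≤ σ^{1/p} w_{j−1} 2^{ψ(j−1)/p} for all j ≥ 1 (p' = p/(p−1)). Define ψ* : ℕ → ℝ by ψ*(0) = 0 and 2^{ψ*(j)−ψ*(j−1)} = ⌊2^{ψ(j)−ψ*(j−1)}⌋.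 Let ξ* ∈ V have depth j₀, and let (Â, ξ̂) be a finite rooted tree of depth N − j₀ whose every non-maximal vertex of depth k has exactly 2^{ψ*(j₀+k+1)−ψ*(j₀+k)} immediate successors, with weights û(η) = u_{j₀+k}, ŵ(η) = w_{j₀+k} for η of depth k. Then 𝔖_{A_{ξ*},u,w} ≤ c · 𝔖_{Â,û,ŵ} for a constant c depending only on p, Ĉ and C*. -/
open scoped Classical

noncomputable section

/-- A finite partial order is a rooted tree if it has a least element (the root) and
for every `ξ` the set of predecessors `{η | η ≤ ξ}` is linearly ordered. -/
def IsRootedTree (V : Type) [Fintype V] [PartialOrder V] : Prop :=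
  (∃ ξ₀ : V, ∀ ξ : V, ξ₀ ≤ ξ) ∧
  ∀ ξ η₁ η₂ : V, η₁ ≤ ξ → η₂ ≤ ξ → η₁ ≤ η₂ ∨ η₂ ≤ η₁

/-- The depth of a vertex: the number of its strict predecessors. -/
def treeDepth {V : Type} [PartialOrder V] (ξ : V) : ℕ :=
  Nat.card {η : V // η < ξ}

/-- The least constant `C ≥ 0` in the discrete two-weight Hardy-type inequality
`(∑_{ξ ≥ ξs} w(ξ)^q (∑_{ξs ≤ ξ' ≤ ξ} u(ξ') f(ξ'))^q)^{1/q} ≤ C (∑_{ξ ≥ ξs} f(ξ)^p)^{1/p}`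
over all nonnegative `f`. -/
def SconstPQ {V : Type} [Fintype V] [PartialOrder V]
    (p q : ℝ) (u w : V → ℝ) (ξs : V) : ℝ :=
  sInf {C : ℝ | 0 ≤ C ∧ ∀ f : V → ℝ, (∀ ξ : V, 0 ≤ f ξ) →
    (∑ ξ ∈ Finset.univ.filter (fun ξ : V => ξs ≤ ξ),
        w ξ ^ q * (∑ ξ' ∈ Finset.univ.filter (fun ξ' : V => ξs ≤ ξ' ∧ ξ' ≤ ξ),
          u ξ' * f ξ') ^ q) ^ (1 / q)
      ≤ C * (∑ ξ ∈ Finset.univ.filter (fun ξ : V => ξs ≤ ξ), f ξ ^ p) ^ (1 / p)}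

/-- The family `J'_{ξs}`: subsets `D` of `{η | η ≥ ξs}` containing `ξs`, closed under
taking intermediate vertices, and such that every non-maximal element of `D` has all
of its immediate successors (in `V`) in `D`. -/
def Jfam {V : Type} [Fintype V] [PartialOrder V] (ξs : V) (D : Finset V) : Prop :=
  ξs ∈ D ∧ (∀ ξ ∈ D, ξs ≤ ξ) ∧
  (∀ η ζ : V, ζ ∈ D → ξs ≤ η → η ≤ ζ → η ∈ D) ∧
  (∀ ξ ∈ D, (∃ ζ ∈ D, ξ < ζ) → ∀ η : V, ξ ⋖ η → η ∈ D)

/-- The quantity `β_D`: the infimum of `(∑_ξ |f(ξ)|^p)^{1/p}` over functions `f` with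
`∑_{ξs ≤ ξ' ≤ ξ} f(ξ') u(ξ') = 1` for every maximal element `ξ` of `D`. -/
def betaD {V : Type} [Fintype V] [PartialOrder V]
    (p : ℝ) (u : V → ℝ) (ξs : V) (D : Finset V) : ℝ :=
  sInf {b : ℝ | ∃ f : V → ℝ,
    (∀ ξ ∈ D, (∀ ζ ∈ D, ¬ ξ < ζ) →
      ∑ ξ' ∈ Finset.univ.filter (fun ξ' : V => ξs ≤ ξ' ∧ ξ' ≤ ξ), f ξ' * u ξ' = 1) ∧
    b = (∑ ξ : V, |f ξ| ^ p) ^ (1 / p)}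

/-- The modified level function `ψ*`: `ψ*(0) = 0` and
`2^{ψ*(j) − ψ*(j−1)} = ⌊2^{ψ(j) − ψ*(j−1)}⌋`. -/
def psiStar (ψ : ℕ → ℝ) : ℕ → ℝ
  | 0 => 0
  | j + 1 => psiStar ψ j + Real.logb 2 ((⌊(2 : ℝ) ^ (ψ (j + 1) - psiStar ψ j)⌋ : ℤ) : ℝ)

open Finset

namespace St11

/-! ### Elementary real-power lemmas -/

lemma tangent_rpow {a b r : ℝ} (ha : 0 ≤ a) (hab : a ≤ b) (hb : 0 < b)
    (hr0 : 0 < r) (hr1 : r < 1) :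
    (b - a) * b ^ (r - 1) ≤ r⁻¹ * (b ^ r - a ^ r) := by
  have hx0 : 0 ≤ a / b := div_nonneg ha hb.le
  have hx1 : a / b ≤ 1 := (div_le_one hb).2 hab
  have key : (a / b) ^ r * 1 ^ (1 - r) ≤ r * (a / b) + (1 - r) * 1 :=
    Real.geom_mean_le_arith_mean2_weighted hr0.le (by linarith) hx0 zero_le_one (by ring)
  have h2 : (a / b) ^ r ≤ r * (a / b) + (1 - r) := by
    simpa using key
  have hbr : (0 : ℝ) < b ^ r := Real.rpow_pos_of_pos hb r
  have e1 : (b - a) * b ^ (r - 1) = (1 - a / b) * b ^ r := by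
    rw [Real.rpow_sub hb, Real.rpow_one]
    field_simp
  have e2 : a ^ r = (a / b) ^ r * b ^ r := by
    rw [← Real.mul_rpow hx0 hb.le]
    congr 1
    field_simp
  rw [e1, e2]
  rw [le_inv_mul_iff₀ hr0]
  have h3 : r * (1 - a / b) ≤ 1 - (a / b) ^ r := by nlinarith
  calc r * ((1 - a / b) * b ^ r) = (r * (1 - a / b)) * b ^ r := by ring
    _ ≤ (1 - (a / b) ^ r) * b ^ r := mul_le_mul_of_nonneg_right h3 hbr.le
    _ = b ^ r - (a / b) ^ r * b ^ r := by ring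

lemma tel_inc {r : ℝ} (hr0 : 0 < r) (hr1 : r < 1) (a : ℕ → ℝ) (ha : ∀ i, 0 < a i)
    (j₀ : ℕ) : ∀ m, j₀ ≤ m →
    ∑ i ∈ Icc j₀ m, a i * (∑ l ∈ Icc j₀ i, a l) ^ (r - 1)
      ≤ r⁻¹ * (∑ l ∈ Icc j₀ m, a l) ^ r := by
  intro m hm
  induction m, hm using Nat.le_induction with
  | base =>
      rw [Finset.Icc_self, Finset.sum_singleton]
      rw [Finset.Icc_self, Finset.sum_singleton]
      have h1 : a j₀ * a j₀ ^ (r - 1) = a j₀ ^ r := by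
        rw [Real.rpow_sub (ha j₀), Real.rpow_one, mul_comm, div_mul_eq_mul_div,
          mul_div_assoc, div_self (ha j₀).ne', mul_one]
      rw [h1]
      have h2 : (0:ℝ) < a j₀ ^ r := Real.rpow_pos_of_pos (ha j₀) r
      have h3 : (1:ℝ) ≤ r⁻¹ := (one_le_inv₀ hr0).2 hr1.le
      nlinarith
  | succ n hn ih =>
      have hmono : ∀ i, 0 < ∑ l ∈ Icc j₀ i, a l → True := fun _ _ => trivial
      have hS : (0:ℝ) < ∑ l ∈ Icc j₀ n, a l :=
        Finset.sum_pos (fun l _ => ha l) (by simp [hn])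
      have hsucc : ∀ (f : ℕ → ℝ), ∑ k ∈ Icc j₀ (n+1), f k = (∑ k ∈ Icc j₀ n, f k) + f (n+1) :=
        fun f => Finset.sum_Icc_succ_top (by omega) f
      rw [hsucc, hsucc]
      have htan := tangent_rpow (a := ∑ l ∈ Icc j₀ n, a l)
        (b := (∑ l ∈ Icc j₀ n, a l) + a (n+1)) hS.le (by nlinarith [ha (n+1)])
        (by nlinarith [ha (n+1)]) hr0 hr1
      have : a (n+1) * ((∑ l ∈ Icc j₀ n, a l) + a (n+1)) ^ (r - 1)
          ≤ r⁻¹ * ((((∑ l ∈ Icc j₀ n, a l) + a (n+1))) ^ r - (∑ l ∈ Icc j₀ n, a l) ^ r) := by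
        have : ((∑ l ∈ Icc j₀ n, a l) + a (n+1)) - (∑ l ∈ Icc j₀ n, a l) = a (n+1) := by ring
        calc a (n+1) * ((∑ l ∈ Icc j₀ n, a l) + a (n+1)) ^ (r - 1)
            = (((∑ l ∈ Icc j₀ n, a l) + a (n+1)) - (∑ l ∈ Icc j₀ n, a l))
              * ((∑ l ∈ Icc j₀ n, a l) + a (n+1)) ^ (r - 1) := by rw [this]
          _ ≤ _ := htan
      linarith

lemma tel_dec {r : ℝ} (hr0 : 0 < r) (hr1 : r < 1) (b : ℕ → ℝ) (hb : ∀ i, 0 < b i)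
    (N : ℕ) : ∀ d j, j ≤ N → N - j ≤ d →
    ∑ k ∈ Icc j N, b k * (∑ l ∈ Icc k N, b l) ^ (r - 1)
      ≤ r⁻¹ * (∑ l ∈ Icc j N, b l) ^ r := by
  have base : ∀ j, j = N →
      ∑ k ∈ Icc j N, b k * (∑ l ∈ Icc k N, b l) ^ (r - 1)
        ≤ r⁻¹ * (∑ l ∈ Icc j N, b l) ^ r := by
    rintro j rfl
    rw [Finset.Icc_self, Finset.sum_singleton]
    rw [Finset.Icc_self, Finset.sum_singleton]
    have h1 : b j * b j ^ (r - 1) = b j ^ r := by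
      rw [Real.rpow_sub (hb j), Real.rpow_one, mul_comm, div_mul_eq_mul_div,
        mul_div_assoc, div_self (hb j).ne', mul_one]
    rw [h1]
    have h2 : (0:ℝ) < b j ^ r := Real.rpow_pos_of_pos (hb j) r
    have h3 : (1:ℝ) ≤ r⁻¹ := (one_le_inv₀ hr0).2 hr1.le
    nlinarith
  intro d
  induction d with
  | zero =>
      intro j hj hd
      exact base j (by omega)
  | succ d ih =>
      intro j hj hd
      by_cases hjN : j = N
      · exact base j hjN
      · have hj1 : j + 1 ≤ N := by omega
        have hsplit : ∀ (f : ℕ → ℝ), ∑ k ∈ Icc j N, f k = f j + ∑ k ∈ Icc (j+1) N, f k := by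
          intro f
          rw [← Finset.insert_Icc_add_one_left_eq_Icc hj, Finset.sum_insert (by simp)]
        rw [hsplit, hsplit]
        have hT1 : (0:ℝ) ≤ ∑ l ∈ Icc (j+1) N, b l :=
          Finset.sum_nonneg (fun l _ => (hb l).le)
        have hTj : (0:ℝ) < b j + ∑ l ∈ Icc (j+1) N, b l := by nlinarith [hb j]
        have htan := tangent_rpow (a := ∑ l ∈ Icc (j+1) N, b l)
          (b := b j + ∑ l ∈ Icc (j+1) N, b l) hT1 (by nlinarith [hb j]) hTj hr0 hr1
        have hbt : b j * (b j + ∑ l ∈ Icc (j+1) N, b l) ^ (r - 1)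
            ≤ r⁻¹ * ((b j + ∑ l ∈ Icc (j+1) N, b l) ^ r - (∑ l ∈ Icc (j+1) N, b l) ^ r) := by
          have e : (b j + ∑ l ∈ Icc (j+1) N, b l) - (∑ l ∈ Icc (j+1) N, b l) = b j := by ring
          calc b j * (b j + ∑ l ∈ Icc (j+1) N, b l) ^ (r - 1)
              = ((b j + ∑ l ∈ Icc (j+1) N, b l) - (∑ l ∈ Icc (j+1) N, b l))
                * (b j + ∑ l ∈ Icc (j+1) N, b l) ^ (r - 1) := by rw [e]
            _ ≤ _ := htan
        have hih := ih (j+1) hj1 (by omega)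
        have hfirst : (∑ l ∈ Icc j N, b l) = b j + ∑ l ∈ Icc (j+1) N, b l := hsplit b
        rw [hfirst] at *
        linarith

/-! ### Tree lemmas -/

section Tree

variable {V : Type} [Fintype V] [PartialOrder V]

lemma treeDepth_eq_card (ξ : V) :
    treeDepth ξ = (Finset.univ.filter (fun η => η < ξ)).card := by
  rw [treeDepth, Nat.card_eq_fintype_card, Fintype.card_subtype]

lemma treeDepth_lt_of_lt {η ξ : V} (h : η < ξ) : treeDepth η < treeDepth ξ := by
  rw [treeDepth_eq_card, treeDepth_eq_card]
  apply Finset.card_lt_card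
  rw [Finset.ssubset_iff_of_subset]
  · exact ⟨η, by simp [h], by simp⟩
  · intro ζ hζ
    simp only [Finset.mem_filter, Finset.mem_univ, true_and] at hζ ⊢
    exact hζ.trans h

lemma treeDepth_le_of_le {η ξ : V} (h : η ≤ ξ) : treeDepth η ≤ treeDepth ξ := by
  rcases eq_or_lt_of_le h with rfl | h
  · exact le_rfl
  · exact (treeDepth_lt_of_lt h).le

lemma eq_of_comparable_of_depth_eq {η₁ η₂ : V} (h : η₁ ≤ η₂ ∨ η₂ ≤ η₁)
    (hd : treeDepth η₁ = treeDepth η₂) : η₁ = η₂ := by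
  rcases h with h | h
  · rcases eq_or_lt_of_le h with rfl | h
    · rfl
    · exact absurd hd (treeDepth_lt_of_lt h).ne
  · rcases eq_or_lt_of_le h with rfl | h
    · rfl
    · exact absurd hd.symm (treeDepth_lt_of_lt h).ne

variable (hT : IsRootedTree V)
include hT

lemma chain_card (ξ : V) :
    (Finset.univ.filter (fun η => η ≤ ξ)).card = treeDepth ξ + 1 := by
  have : Finset.univ.filter (fun η => η ≤ ξ) =
      insert ξ (Finset.univ.filter (fun η => η < ξ)) := by
    ext ζ
    simp only [Finset.mem_filter, Finset.mem_univ, true_and, Finset.mem_insert]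
    constructor
    · intro h
      rcases eq_or_lt_of_le h with rfl | h
      · exact Or.inl rfl
      · exact Or.inr h
    · rintro (rfl | h)
      · exact le_rfl
      · exact h.le
  rw [this, Finset.card_insert_of_notMem (by simp), ← treeDepth_eq_card]

lemma exists_le_depth {ξ : V} {i : ℕ} (hi : i ≤ treeDepth ξ) :
    ∃ η, η ≤ ξ ∧ treeDepth η = i := by
  classical
  set C := Finset.univ.filter (fun η => η ≤ ξ) with hC
  have hinj : Set.InjOn treeDepth (C : Set V) := by
    intro η₁ h1 η₂ h2 hd
    simp only [hC, Finset.coe_filter, Set.mem_setOf_eq, Finset.mem_univ, true_and] at h1 h2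
    exact eq_of_comparable_of_depth_eq (hT.2 ξ η₁ η₂ h1 h2) hd
  have hcard : (C.image treeDepth).card = treeDepth ξ + 1 := by
    rw [Finset.card_image_of_injOn hinj, chain_card hT]
  have hsub : C.image treeDepth ⊆ Finset.range (treeDepth ξ + 1) := by
    intro k hk
    simp only [Finset.mem_image, hC, Finset.mem_filter, Finset.mem_univ, true_and] at hk
    obtain ⟨η, hη, rfl⟩ := hk
    exact Finset.mem_range.2 (Nat.lt_succ_of_le (treeDepth_le_of_le hη))
  have heq : C.image treeDepth = Finset.range (treeDepth ξ + 1) :=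
    Finset.eq_of_subset_of_card_le hsub (by rw [hcard, Finset.card_range])
  have : i ∈ C.image treeDepth := heq ▸ Finset.mem_range.2 (Nat.lt_succ_of_le hi)
  simp only [Finset.mem_image, hC, Finset.mem_filter, Finset.mem_univ, true_and] at this
  obtain ⟨η, hη, hd⟩ := this
  exact ⟨η, hη, hd⟩

lemma chain_reindex {ξs ξ : V} (hle : ξs ≤ ξ) (g : ℕ → ℝ) :
    ∑ η ∈ Finset.univ.filter (fun η => ξs ≤ η ∧ η ≤ ξ), g (treeDepth η)
      = ∑ i ∈ Icc (treeDepth ξs) (treeDepth ξ), g i := by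
  classical
  apply Finset.sum_nbij (i := treeDepth)
  · intro η hη
    simp only [Finset.mem_filter, Finset.mem_univ, true_and] at hη
    exact Finset.mem_Icc.2 ⟨treeDepth_le_of_le hη.1, treeDepth_le_of_le hη.2⟩
  · intro η₁ h1 η₂ h2 hd
    simp only [Finset.coe_filter, Set.mem_setOf_eq, Finset.mem_univ, true_and] at h1 h2
    exact eq_of_comparable_of_depth_eq (hT.2 ξ η₁ η₂ h1.2 h2.2) hd
  · intro i hi
    simp only [Finset.coe_Icc, Set.mem_Icc] at hi
    obtain ⟨η, hηle, hηd⟩ := exists_le_depth hT (hi.2 : i ≤ treeDepth ξ)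
    refine ⟨η, ?_, hηd⟩
    simp only [Finset.coe_filter, Set.mem_setOf_eq, Finset.mem_univ, true_and]
    refine ⟨?_, hηle⟩
    rcases hT.2 ξ η ξs hηle hle with h | h
    · -- η ≤ ξs : depth forces η = ξs
      have : treeDepth η = treeDepth ξs :=
        le_antisymm (treeDepth_le_of_le h) (hηd ▸ hi.1)
      rw [eq_of_comparable_of_depth_eq (Or.inl h) this]
    · exact h
  · intro η hη
    rfl

lemma cover_depth {ξ η : V} (h : ξ ⋖ η) : treeDepth η = treeDepth ξ + 1 := by
  have h1 : treeDepth ξ < treeDepth η := treeDepth_lt_of_lt h.1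
  rcases eq_or_lt_of_le (Nat.succ_le_of_lt h1) with he | hlt
  · exact he.symm
  · exfalso
    obtain ⟨ζ, hζle, hζd⟩ := exists_le_depth hT (le_of_lt hlt : treeDepth ξ + 1 ≤ treeDepth η)
    have hζη : ζ < η := lt_of_le_of_ne hζle (by rintro rfl; omega)
    have hξζ : ξ < ζ := by
      rcases hT.2 η ξ ζ h.1.le hζle with hc | hc
      · exact lt_of_le_of_ne hc (by rintro rfl; omega)
      · exfalso
        have := treeDepth_le_of_le hc
        omega
    exact h.2 hξζ hζη

end Tree

section Tree2

variable {V : Type} [Fintype V] [PartialOrder V]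

lemma root_depth {ξ₀ : V} (hroot : ∀ η : V, ξ₀ ≤ η) : treeDepth ξ₀ = 0 := by
  rw [treeDepth_eq_card]
  rw [Finset.card_eq_zero]
  ext ζ
  simp only [Finset.mem_filter, Finset.mem_univ, true_and, Finset.notMem_empty, iff_false]
  intro h
  exact absurd (lt_of_le_of_lt (hroot ζ) h) (lt_irrefl _)

lemma depth_zero_eq_root {ξ₀ : V} (hroot : ∀ η : V, ξ₀ ≤ η) {η : V}
    (h : treeDepth η = 0) : η = ξ₀ := by
  by_contra hne
  have : ξ₀ < η := lt_of_le_of_ne (hroot η) (Ne.symm hne)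
  have := treeDepth_lt_of_lt this
  omega

variable (hT : IsRootedTree V)
include hT

lemma level_zero {ξ₀ : V} (hroot : ∀ η : V, ξ₀ ≤ η) :
    Finset.univ.filter (fun η : V => treeDepth η = 0) = {ξ₀} := by
  ext η
  simp only [Finset.mem_filter, Finset.mem_univ, true_and, Finset.mem_singleton]
  constructor
  · exact depth_zero_eq_root hroot
  · rintro rfl; exact root_depth hroot

lemma level_succ_card (k : ℕ) (Bk : ℝ)
    (hbr : ∀ η : V, treeDepth η = k → ((Nat.card {η' : V // η ⋖ η'} : ℝ)) = Bk) :
    ((Finset.univ.filter (fun η : V => treeDepth η = k + 1)).card : ℝ)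
      = ((Finset.univ.filter (fun η : V => treeDepth η = k)).card : ℝ) * Bk := by
  classical
  have hcovcard : ∀ η : V, treeDepth η = k →
      ((Finset.univ.filter (fun ζ => η ⋖ ζ)).card : ℝ) = Bk := by
    intro η hη
    rw [← hbr η hη, Nat.card_eq_fintype_card, Fintype.card_subtype]
  have hbi : Finset.univ.filter (fun η : V => treeDepth η = k + 1)
      = (Finset.univ.filter (fun η : V => treeDepth η = k)).biUnion
          (fun η => Finset.univ.filter (fun ζ => η ⋖ ζ)) := by
    ext ζ
    simp only [Finset.mem_filter, Finset.mem_univ, true_and, Finset.mem_biUnion]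
    constructor
    · intro hd
      obtain ⟨η, hle, hdep⟩ := exists_le_depth hT (by omega : k ≤ treeDepth ζ)
      have hlt : η < ζ := lt_of_le_of_ne hle (by rintro rfl; omega)
      refine ⟨η, hdep, hlt, ?_⟩
      intro μ h1 h2
      have d1 := treeDepth_lt_of_lt h1
      have d2 := treeDepth_lt_of_lt h2
      omega
    · rintro ⟨η, hdep, hcov⟩
      rw [cover_depth hT hcov, hdep]
  rw [hbi, Finset.card_biUnion]
  · push_cast
    rw [Finset.sum_congr rfl (fun η hη => by
      rw [hcovcard η (Finset.mem_filter.1 hη).2])]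
    rw [Finset.sum_const, nsmul_eq_mul]
  · intro η₁ h1 η₂ h2 hne
    simp only [Finset.mem_coe, Finset.mem_filter, Finset.mem_univ, true_and] at h1 h2
    rw [Function.onFun, Finset.disjoint_left]
    intro ζ hz1 hz2
    simp only [Finset.mem_filter, Finset.mem_univ, true_and] at hz1 hz2
    exact hne (eq_of_comparable_of_depth_eq
      (hT.2 ζ η₁ η₂ hz1.1.le hz2.1.le) (h1.trans h2.symm))

end Tree2

/-! ### psiStar lemmas -/

lemma psiStar_bounds (ψ : ℕ → ℝ) (hmono : Monotone ψ) (hψ0 : ψ 0 = 0) :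
    ∀ j, psiStar ψ j ≤ ψ j ∧ ψ j ≤ psiStar ψ j + 1 := by
  intro j
  induction j with
  | zero => simp [psiStar, hψ0]
  | succ j ih =>
      have hx0 : 0 ≤ ψ (j+1) - psiStar ψ j := by
        have := hmono (Nat.le_succ j)
        linarith [ih.1]
      set x := ψ (j+1) - psiStar ψ j with hx
      have h2x : (1:ℝ) ≤ (2:ℝ) ^ x := by
        calc (1:ℝ) = (2:ℝ) ^ (0:ℝ) := by rw [Real.rpow_zero]
          _ ≤ (2:ℝ) ^ x := Real.rpow_le_rpow_of_exponent_le one_le_two hx0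
      have hfl1 : (1:ℝ) ≤ ((⌊(2:ℝ) ^ x⌋ : ℤ) : ℝ) := by
        exact_mod_cast Int.le_floor.2 (by exact_mod_cast h2x)
      have hflpos : (0:ℝ) < ((⌊(2:ℝ) ^ x⌋ : ℤ) : ℝ) := lt_of_lt_of_le one_pos hfl1
      have hup : Real.logb 2 ((⌊(2:ℝ) ^ x⌋ : ℤ) : ℝ) ≤ x := by
        calc Real.logb 2 ((⌊(2:ℝ) ^ x⌋ : ℤ) : ℝ) ≤ Real.logb 2 ((2:ℝ) ^ x) :=
              Real.logb_le_logb_of_le (by norm_num) hflpos (Int.floor_le _)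
          _ = x := Real.logb_rpow (by norm_num) (by norm_num)
      have hlow : x - 1 ≤ Real.logb 2 ((⌊(2:ℝ) ^ x⌋ : ℤ) : ℝ) := by
        have hhalf : (2:ℝ) ^ (x - 1) ≤ ((⌊(2:ℝ) ^ x⌋ : ℤ) : ℝ) := by
          by_cases hc : (2:ℝ) ^ x < 2
          · have hxle : x - 1 ≤ 0 := by
              by_contra hcon
              push_neg at hcon
              have : (2:ℝ) ^ (1:ℝ) ≤ (2:ℝ) ^ x :=
                Real.rpow_le_rpow_of_exponent_le one_le_two (by linarith)
              rw [Real.rpow_one] at this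
              linarith
            calc (2:ℝ) ^ (x - 1) ≤ 1 :=
                  Real.rpow_le_one_of_one_le_of_nonpos one_le_two hxle
              _ ≤ _ := hfl1
          · push_neg at hc
            have h1 : (2:ℝ) ^ x - 1 < ((⌊(2:ℝ) ^ x⌋ : ℤ) : ℝ) := Int.sub_one_lt_floor _
            have h2 : (2:ℝ) ^ (x - 1) = (2:ℝ) ^ x / 2 := by
              rw [Real.rpow_sub (by norm_num), Real.rpow_one]
            nlinarith
        calc x - 1 = Real.logb 2 ((2:ℝ) ^ (x - 1)) := (Real.logb_rpow (by norm_num) (by norm_num)).symm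
          _ ≤ _ := Real.logb_le_logb_of_le (by norm_num) (by positivity) hhalf
      constructor
      · show psiStar ψ j + _ ≤ ψ (j+1)
        have := hup
        linarith
      · show ψ (j+1) ≤ psiStar ψ j + _ + 1
        linarith

/-! ### Part E : lower bound for the Hardy constant of the reference tree -/

lemma sconst_nonneg {V : Type} [Fintype V] [PartialOrder V]
    (p q : ℝ) (u w : V → ℝ) (ξs : V) : 0 ≤ SconstPQ p q u w ξs :=
  Real.sInf_nonneg (fun _ hx => hx.1)

lemma setHat_nonempty {Ahat : Type} [Fintype Ahat] [PartialOrder Ahat]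
    {p : ℝ} (hp : 1 < p) (uh wh : Ahat → ℝ) (huh : ∀ η, 0 < uh η) (hwh : ∀ η, 0 < wh η)
    (ξhat : Ahat) (hroot : ∀ η : Ahat, ξhat ≤ η) :
    Set.Nonempty {C : ℝ | 0 ≤ C ∧ ∀ f : Ahat → ℝ, (∀ ξ : Ahat, 0 ≤ f ξ) →
      (∑ ξ ∈ Finset.univ.filter (fun ξ : Ahat => ξhat ≤ ξ),
          wh ξ ^ p * (∑ ξ' ∈ Finset.univ.filter (fun ξ' : Ahat => ξhat ≤ ξ' ∧ ξ' ≤ ξ),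
            uh ξ' * f ξ') ^ p) ^ (1 / p)
        ≤ C * (∑ ξ ∈ Finset.univ.filter (fun ξ : Ahat => ξhat ≤ ξ), f ξ ^ p) ^ (1 / p)} := by
  classical
  have hp0 : (0:ℝ) < p := lt_trans one_pos hp
  have hAall : Finset.univ.filter (fun ξ : Ahat => ξhat ≤ ξ) = Finset.univ :=
    Finset.filter_true_of_mem (fun η _ => hroot η)
  set W : ℝ := ∑ η : Ahat, wh η ^ p with hW
  set U : ℝ := ∑ η : Ahat, uh η with hU
  have hWnn : 0 ≤ W := Finset.sum_nonneg (fun η _ => Real.rpow_nonneg (hwh η).le p)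
  have hUnn : 0 ≤ U := Finset.sum_nonneg (fun η _ => (huh η).le)
  refine ⟨W ^ (1/p) * U, ⟨by positivity, ?_⟩⟩
  intro f hf
  rw [hAall]
  set F : ℝ := ∑ ξ : Ahat, f ξ ^ p with hF
  have hFnn : 0 ≤ F := Finset.sum_nonneg (fun η _ => Real.rpow_nonneg (hf η) p)
  have hfle : ∀ η : Ahat, f η ≤ F ^ (1/p) := by
    intro η
    have h1 : f η ^ p ≤ F := Finset.single_le_sum
      (fun η _ => Real.rpow_nonneg (hf η) p) (Finset.mem_univ η)
    calc f η = (f η ^ p) ^ (1/p) := by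
          rw [one_div, Real.rpow_rpow_inv (hf η) hp0.ne']
      _ ≤ F ^ (1/p) := Real.rpow_le_rpow (Real.rpow_nonneg (hf η) p) h1 (by positivity)
  have hchain : ∀ ξ : Ahat,
      (∑ ξ' ∈ Finset.univ.filter (fun ξ' : Ahat => ξhat ≤ ξ' ∧ ξ' ≤ ξ), uh ξ' * f ξ')
        ≤ U * F ^ (1/p) := by
    intro ξ
    calc ∑ ξ' ∈ Finset.univ.filter (fun ξ' : Ahat => ξhat ≤ ξ' ∧ ξ' ≤ ξ), uh ξ' * f ξ'
        ≤ ∑ ξ' ∈ Finset.univ.filter (fun ξ' : Ahat => ξhat ≤ ξ' ∧ ξ' ≤ ξ),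
            uh ξ' * F ^ (1/p) := Finset.sum_le_sum (fun η _ =>
              mul_le_mul_of_nonneg_left (hfle η) (huh η).le)
      _ ≤ ∑ ξ' : Ahat, uh ξ' * F ^ (1/p) :=
          Finset.sum_le_sum_of_subset_of_nonneg (Finset.filter_subset _ _)
            (fun η _ _ => mul_nonneg (huh η).le (Real.rpow_nonneg hFnn _))
      _ = U * F ^ (1/p) := by rw [hU, ← Finset.sum_mul]
  have hkey : ∑ ξ : Ahat, wh ξ ^ p *
      (∑ ξ' ∈ Finset.univ.filter (fun ξ' : Ahat => ξhat ≤ ξ' ∧ ξ' ≤ ξ), uh ξ' * f ξ') ^ p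
      ≤ W * (U * F ^ (1/p)) ^ p := by
    rw [hW, Finset.sum_mul]
    apply Finset.sum_le_sum
    intro ξ _
    apply mul_le_mul_of_nonneg_left _ (Real.rpow_nonneg (hwh ξ).le p)
    apply Real.rpow_le_rpow _ (hchain ξ) hp0.le
    exact Finset.sum_nonneg (fun η hη => mul_nonneg (huh η).le (hf η))
  calc (∑ ξ : Ahat, wh ξ ^ p *
      (∑ ξ' ∈ Finset.univ.filter (fun ξ' : Ahat => ξhat ≤ ξ' ∧ ξ' ≤ ξ), uh ξ' * f ξ') ^ p) ^ (1/p)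
      ≤ (W * (U * F ^ (1/p)) ^ p) ^ (1/p) := by
        apply Real.rpow_le_rpow _ hkey (by positivity)
        apply Finset.sum_nonneg
        intro ξ _
        apply mul_nonneg (Real.rpow_nonneg (hwh ξ).le p)
        apply Real.rpow_nonneg
        exact Finset.sum_nonneg (fun η hη => mul_nonneg (huh η).le (hf η))
    _ = W ^ (1/p) * U * F ^ (1/p) := by
        simp only [one_div]
        have hx : (0:ℝ) ≤ U * F ^ p⁻¹ := mul_nonneg hUnn (Real.rpow_nonneg hFnn _)
        rw [Real.mul_rpow hWnn (Real.rpow_nonneg hx p), Real.rpow_rpow_inv hx hp0.ne']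
        ring


lemma sum_shift (j₀ a b : ℕ) (F : ℕ → ℝ) :
    ∑ k ∈ Icc a b, F (j₀ + k) = ∑ l ∈ Icc (j₀ + a) (j₀ + b), F l := by
  apply Finset.sum_nbij' (i := fun k => j₀ + k) (j := fun l => l - j₀)
  · intro x hx; simp only [Finset.mem_Icc] at hx ⊢; omega
  · intro x hx; simp only [Finset.mem_Icc] at hx ⊢; omega
  · intro x hx; simp only [Finset.mem_Icc] at hx; omega
  · intro x hx; simp only [Finset.mem_Icc] at hx; omega
  · intro x hx; rfl

lemma sum_ite_le {m k1 : ℕ} (h : k1 ≤ m) (F : ℕ → ℝ) :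
    ∑ i ∈ Icc 0 m, (if i ≤ k1 then F i else 0) = ∑ i ∈ Icc 0 k1, F i := by
  rw [← Finset.sum_filter]
  congr 1
  ext i
  simp only [Finset.mem_filter, Finset.mem_Icc]
  omega

lemma partE {Ahat : Type} [Fintype Ahat] [PartialOrder Ahat] (hT : IsRootedTree Ahat)
    {p p' : ℝ} (hpq : Real.HolderConjugate p p')
    (u w : ℕ → ℝ) (hu : ∀ j, 0 < u j) (hw : ∀ j, 0 < w j)
    (j₀ N : ℕ) (hj₀N : j₀ ≤ N)
    (nh : ℕ → ℝ) (hnh : ∀ i, 0 < nh i)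
    (ξhat : Ahat) (hroot : ∀ η : Ahat, ξhat ≤ η)
    (hdep : ∀ η : Ahat, treeDepth η ≤ N - j₀)
    (hlevel : ∀ k, k ≤ N - j₀ →
      ((Finset.univ.filter (fun η : Ahat => treeDepth η = k)).card : ℝ) = nh (j₀ + k))
    (j1 : ℕ) (hj1l : j₀ ≤ j1) (hj1r : j1 ≤ N) :
    (∑ l ∈ Icc j₀ j1, u l ^ p' * nh l ^ (-(p' - 1))) ^ (p - 1)
        * (∑ k ∈ Icc j1 N, nh k * w k ^ p)
      ≤ (SconstPQ p p (fun η : Ahat => u (j₀ + treeDepth η))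
          (fun η : Ahat => w (j₀ + treeDepth η)) ξhat) ^ p := by
  classical
  have hp : 1 < p := hpq.lt
  have hp0 : (0:ℝ) < p := lt_trans one_pos hp
  have hp'1 : 1 < p' := hpq.symm.lt
  have hp'0 : (0:ℝ) < p' := lt_trans one_pos hp'1
  set A : ℕ → ℝ := fun l => u l ^ p' * nh l ^ (-(p' - 1)) with hA
  have hApos : ∀ l, 0 < A l := fun l =>
    mul_pos (Real.rpow_pos_of_pos (hu l) p') (Real.rpow_pos_of_pos (hnh l) _)
  set tU : ℝ := ∑ l ∈ Icc j₀ j1, A l with htUdef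
  set tV : ℝ := ∑ k ∈ Icc j1 N, nh k * w k ^ p with htVdef
  have htU : 0 < tU := Finset.sum_pos (fun l _ => hApos l) (by simp [hj1l])
  have htV : 0 < tV := Finset.sum_pos
    (fun k _ => mul_pos (hnh k) (Real.rpow_pos_of_pos (hw k) p)) (by simp [hj1r])
  set g : ℕ → ℝ := fun i => u i ^ (p' - 1) * nh i ^ (-(p' - 1)) with hgdef
  have hgpos : ∀ i, 0 < g i := fun i =>
    mul_pos (Real.rpow_pos_of_pos (hu i) _) (Real.rpow_pos_of_pos (hnh i) _)
  have hug : ∀ i, u i * g i = A i := by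
    intro i
    show u i * (u i ^ (p' - 1) * nh i ^ (-(p' - 1))) = u i ^ p' * nh i ^ (-(p' - 1))
    have h1 : u i * u i ^ (p' - 1) = u i ^ p' := by
      nth_rewrite 1 [← Real.rpow_one (u i)]
      rw [← Real.rpow_add (hu i)]
      ring_nf
    rw [← mul_assoc, h1]
  have hsub1 : (p' - 1) * p = p' := hpq.symm.sub_one_mul_conj
  have hngp : ∀ i, nh i * g i ^ p = A i := by
    intro i
    show nh i * (u i ^ (p' - 1) * nh i ^ (-(p' - 1))) ^ p = u i ^ p' * nh i ^ (-(p' - 1))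
    rw [Real.mul_rpow (Real.rpow_nonneg (hu i).le _) (Real.rpow_nonneg (hnh i).le _),
      ← Real.rpow_mul (hu i).le, ← Real.rpow_mul (hnh i).le, hsub1]
    have h2 : -(p' - 1) * p = -p' := by rw [neg_mul, hsub1]
    rw [h2]
    have h3 : nh i * (u i ^ p' * nh i ^ (-p')) = u i ^ p' * (nh i ^ (1:ℝ) * nh i ^ (-p')) := by
      rw [Real.rpow_one]; ring
    rw [h3, ← Real.rpow_add (hnh i)]
    have h4 : (1:ℝ) + -p' = -(p' - 1) := by ring
    rw [h4]
  have hAall : Finset.univ.filter (fun ξ : Ahat => ξhat ≤ ξ) = Finset.univ :=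
    Finset.filter_true_of_mem (fun η _ => hroot η)
  have hdroot : treeDepth ξhat = 0 := root_depth hroot
  set k1 : ℕ := j1 - j₀ with hk1def
  have hk1 : j₀ + k1 = j1 := by omega
  have hk1K : k1 ≤ N - j₀ := by omega
  set fh : Ahat → ℝ := fun η => if j₀ + treeDepth η ≤ j1 then g (j₀ + treeDepth η) else 0
    with hfhdef
  have hfh0 : ∀ η, 0 ≤ fh η := by
    intro η
    show (0:ℝ) ≤ if j₀ + treeDepth η ≤ j1 then g (j₀ + treeDepth η) else 0
    split_ifs
    · exact (hgpos _).le
    · exact le_rfl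
  have hfhp : ∀ η : Ahat, fh η ^ p
      = if j₀ + treeDepth η ≤ j1 then g (j₀ + treeDepth η) ^ p else 0 := by
    intro η
    show (if j₀ + treeDepth η ≤ j1 then g (j₀ + treeDepth η) else 0) ^ p = _
    split_ifs with h
    · rfl
    · exact Real.zero_rpow hp0.ne'
  have hFsum : ∑ η : Ahat, fh η ^ p = tU := by
    calc ∑ η : Ahat, fh η ^ p
        = ∑ η : Ahat, (if j₀ + treeDepth η ≤ j1 then g (j₀ + treeDepth η) ^ p else 0) :=
          Finset.sum_congr rfl (fun η _ => hfhp η)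
      _ = ∑ k ∈ Icc 0 (N - j₀), ∑ η ∈ Finset.univ.filter (fun η : Ahat => treeDepth η = k),
            (if j₀ + treeDepth η ≤ j1 then g (j₀ + treeDepth η) ^ p else 0) :=
          (Finset.sum_fiberwise_of_maps_to
            (fun η _ => by simp only [Finset.mem_Icc]; exact ⟨Nat.zero_le _, hdep η⟩) _).symm
      _ = ∑ k ∈ Icc 0 (N - j₀), (if k ≤ k1 then nh (j₀ + k) * g (j₀ + k) ^ p else 0) := by
          apply Finset.sum_congr rfl
          intro k hk
          calc ∑ η ∈ Finset.univ.filter (fun η : Ahat => treeDepth η = k),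
                (if j₀ + treeDepth η ≤ j1 then g (j₀ + treeDepth η) ^ p else 0)
              = ∑ _η ∈ Finset.univ.filter (fun η : Ahat => treeDepth η = k),
                (if j₀ + k ≤ j1 then g (j₀ + k) ^ p else 0) :=
                Finset.sum_congr rfl (fun η hη => by rw [(Finset.mem_filter.1 hη).2])
            _ = ((Finset.univ.filter (fun η : Ahat => treeDepth η = k)).card : ℝ)
                  * (if j₀ + k ≤ j1 then g (j₀ + k) ^ p else 0) := by
                rw [Finset.sum_const, nsmul_eq_mul]
            _ = nh (j₀ + k) * (if j₀ + k ≤ j1 then g (j₀ + k) ^ p else 0) := by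
                rw [hlevel k (Finset.mem_Icc.1 hk).2]
            _ = (if k ≤ k1 then nh (j₀ + k) * g (j₀ + k) ^ p else 0) := by
                split_ifs with h1 h2 h2
                · rfl
                · omega
                · omega
                · exact mul_zero _
      _ = ∑ k ∈ Icc 0 k1, nh (j₀ + k) * g (j₀ + k) ^ p :=
          sum_ite_le hk1K _
      _ = ∑ k ∈ Icc 0 k1, A (j₀ + k) :=
          Finset.sum_congr rfl (fun k _ => hngp (j₀ + k))
      _ = ∑ l ∈ Icc (j₀ + 0) (j₀ + k1), A l := sum_shift j₀ 0 k1 A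
      _ = tU := by rw [Nat.add_zero, hk1]
  have hchain : ∀ η : Ahat, k1 ≤ treeDepth η →
      ∑ η' ∈ Finset.univ.filter (fun η' : Ahat => ξhat ≤ η' ∧ η' ≤ η),
        (u (j₀ + treeDepth η') * fh η') = tU := by
    intro η hη
    calc ∑ η' ∈ Finset.univ.filter (fun η' : Ahat => ξhat ≤ η' ∧ η' ≤ η),
          (u (j₀ + treeDepth η') * fh η')
        = ∑ i ∈ Icc (treeDepth ξhat) (treeDepth η),
            (fun i => u (j₀ + i) * (if j₀ + i ≤ j1 then g (j₀ + i) else 0)) i :=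
          chain_reindex hT (hroot η)
            (fun i => u (j₀ + i) * (if j₀ + i ≤ j1 then g (j₀ + i) else 0))
      _ = ∑ i ∈ Icc 0 (treeDepth η), (if i ≤ k1 then u (j₀ + i) * g (j₀ + i) else 0) := by
          rw [hdroot]
          apply Finset.sum_congr rfl
          intro i _
          show u (j₀ + i) * (if j₀ + i ≤ j1 then g (j₀ + i) else 0) = _
          split_ifs with ha hb hb
          · rfl
          · omega
          · omega
          · exact mul_zero _
      _ = ∑ i ∈ Icc 0 k1, u (j₀ + i) * g (j₀ + i) := sum_ite_le hη _
      _ = ∑ i ∈ Icc 0 k1, A (j₀ + i) := Finset.sum_congr rfl (fun i _ => hug (j₀ + i))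
      _ = ∑ l ∈ Icc (j₀ + 0) (j₀ + k1), A l := sum_shift j₀ 0 k1 A
      _ = tU := by rw [Nat.add_zero, hk1]
  have hΦnn : ∀ ξ : Ahat, 0 ≤ w (j₀ + treeDepth ξ) ^ p *
      (∑ η' ∈ Finset.univ.filter (fun η' : Ahat => ξhat ≤ η' ∧ η' ≤ ξ),
        u (j₀ + treeDepth η') * fh η') ^ p := by
    intro ξ
    apply mul_nonneg (Real.rpow_nonneg (hw _).le p)
    apply Real.rpow_nonneg
    exact Finset.sum_nonneg (fun η' _ => mul_nonneg (hu _).le (hfh0 η'))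
  have hSub : ∑ η ∈ Finset.univ.filter (fun η : Ahat => k1 ≤ treeDepth η),
      (w (j₀ + treeDepth η) ^ p *
        (∑ η' ∈ Finset.univ.filter (fun η' : Ahat => ξhat ≤ η' ∧ η' ≤ η),
          u (j₀ + treeDepth η') * fh η') ^ p)
      = tU ^ p * tV := by
    calc ∑ η ∈ Finset.univ.filter (fun η : Ahat => k1 ≤ treeDepth η),
        (w (j₀ + treeDepth η) ^ p *
          (∑ η' ∈ Finset.univ.filter (fun η' : Ahat => ξhat ≤ η' ∧ η' ≤ η),
            u (j₀ + treeDepth η') * fh η') ^ p)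
        = ∑ η ∈ Finset.univ.filter (fun η : Ahat => k1 ≤ treeDepth η),
            tU ^ p * (fun i => w (j₀ + i) ^ p) (treeDepth η) := by
          apply Finset.sum_congr rfl
          intro η hη
          rw [hchain η (Finset.mem_filter.1 hη).2]
          exact mul_comm _ _
      _ = tU ^ p * ∑ η ∈ Finset.univ.filter (fun η : Ahat => k1 ≤ treeDepth η),
            (fun i => w (j₀ + i) ^ p) (treeDepth η) := by rw [← Finset.mul_sum]
      _ = tU ^ p * tV := by
          congr 1
          calc ∑ η ∈ Finset.univ.filter (fun η : Ahat => k1 ≤ treeDepth η),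
              (fun i => w (j₀ + i) ^ p) (treeDepth η)
              = ∑ k ∈ Icc k1 (N - j₀),
                  ∑ η ∈ (Finset.univ.filter (fun η : Ahat => k1 ≤ treeDepth η)).filter
                    (fun η => treeDepth η = k),
                  (fun i => w (j₀ + i) ^ p) (treeDepth η) :=
                (Finset.sum_fiberwise_of_maps_to (fun η hη => by
                  simp only [Finset.mem_filter, Finset.mem_univ, true_and] at hη
                  simp only [Finset.mem_Icc]
                  exact ⟨hη, hdep η⟩) _).symm
            _ = ∑ k ∈ Icc k1 (N - j₀), nh (j₀ + k) * w (j₀ + k) ^ p := by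
                apply Finset.sum_congr rfl
                intro k hk
                have he : (Finset.univ.filter (fun η : Ahat => k1 ≤ treeDepth η)).filter
                    (fun η => treeDepth η = k)
                    = Finset.univ.filter (fun η : Ahat => treeDepth η = k) := by
                  rw [Finset.filter_filter]
                  ext η
                  simp only [Finset.mem_filter, Finset.mem_univ, true_and]
                  constructor
                  · exact fun h => h.2
                  · intro h
                    exact ⟨by rw [h]; exact (Finset.mem_Icc.1 hk).1, h⟩
                rw [he]
                calc ∑ η ∈ Finset.univ.filter (fun η : Ahat => treeDepth η = k),
                    (fun i => w (j₀ + i) ^ p) (treeDepth η)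
                    = ∑ _η ∈ Finset.univ.filter (fun η : Ahat => treeDepth η = k),
                        w (j₀ + k) ^ p :=
                      Finset.sum_congr rfl (fun η hη => by
                        show w (j₀ + treeDepth η) ^ p = _
                        rw [(Finset.mem_filter.1 hη).2])
                  _ = nh (j₀ + k) * w (j₀ + k) ^ p := by
                      rw [Finset.sum_const, nsmul_eq_mul, hlevel k (Finset.mem_Icc.1 hk).2]
            _ = ∑ l ∈ Icc (j₀ + k1) (j₀ + (N - j₀)), nh l * w l ^ p :=
                sum_shift j₀ k1 (N - j₀) (fun l => nh l * w l ^ p)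
            _ = tV := by rw [hk1, show j₀ + (N - j₀) = N by omega]
  have hmem : ∀ C : ℝ, 0 ≤ C →
      ((∑ ξ ∈ Finset.univ.filter (fun ξ : Ahat => ξhat ≤ ξ),
          w (j₀ + treeDepth ξ) ^ p *
            (∑ ξ' ∈ Finset.univ.filter (fun ξ' : Ahat => ξhat ≤ ξ' ∧ ξ' ≤ ξ),
              u (j₀ + treeDepth ξ') * fh ξ') ^ p) ^ (1/p)
        ≤ C * (∑ ξ ∈ Finset.univ.filter (fun ξ : Ahat => ξhat ≤ ξ), fh ξ ^ p) ^ (1/p)) →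
      tU ^ (p - 1) * tV ≤ C ^ p := by
    intro C hC0 hineq
    rw [hAall, hFsum] at hineq
    set Sh : ℝ := ∑ ξ : Ahat, w (j₀ + treeDepth ξ) ^ p *
      (∑ ξ' ∈ Finset.univ.filter (fun ξ' : Ahat => ξhat ≤ ξ' ∧ ξ' ≤ ξ),
        u (j₀ + treeDepth ξ') * fh ξ') ^ p with hShdef
    have hShnn : 0 ≤ Sh := Finset.sum_nonneg (fun ξ _ => hΦnn ξ)
    have hlow : tU ^ p * tV ≤ Sh := by
      rw [← hSub]
      exact Finset.sum_le_sum_of_subset_of_nonneg (Finset.subset_univ _)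
        (fun η _ _ => hΦnn η)
    have h3 : Sh ≤ (C * tU ^ (1/p)) ^ p := by
      calc Sh = (Sh ^ (1/p)) ^ p := by
            rw [one_div, Real.rpow_inv_rpow hShnn hp0.ne']
        _ ≤ (C * tU ^ (1/p)) ^ p :=
            Real.rpow_le_rpow (Real.rpow_nonneg hShnn _) hineq hp0.le
    have h4 : (C * tU ^ (1/p)) ^ p = C ^ p * tU := by
      rw [Real.mul_rpow hC0 (Real.rpow_nonneg htU.le _), one_div,
        Real.rpow_inv_rpow htU.le hp0.ne']
    have h5 : tU ^ p * tV ≤ C ^ p * tU := by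
      rw [← h4]; exact le_trans hlow h3
    have h6 : tU ^ p = tU ^ (p - 1) * tU := by
      nth_rewrite 1 [show p = (p - 1) + 1 by ring]
      rw [Real.rpow_add_one htU.ne']
    rw [h6] at h5
    have h7 : (tU ^ (p - 1) * tV) * tU ≤ (C ^ p) * tU := by
      calc (tU ^ (p - 1) * tV) * tU = tU ^ (p - 1) * tU * tV := by ring
        _ ≤ C ^ p * tU := h5
    exact le_of_mul_le_mul_right h7 htU
  have hne := setHat_nonempty hp (fun η : Ahat => u (j₀ + treeDepth η))
    (fun η : Ahat => w (j₀ + treeDepth η)) (fun η => hu _) (fun η => hw _) ξhat hroot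
  have hXnn : (0:ℝ) ≤ tU ^ (p - 1) * tV :=
    mul_nonneg (Real.rpow_nonneg htU.le _) htV.le
  have hmle : (tU ^ (p - 1) * tV) ^ (1/p)
      ≤ SconstPQ p p (fun η : Ahat => u (j₀ + treeDepth η))
          (fun η : Ahat => w (j₀ + treeDepth η)) ξhat := by
    unfold SconstPQ
    apply le_csInf hne
    intro C hC
    obtain ⟨hC0, hCf⟩ := hC
    have h6 := hmem C hC0 (hCf fh hfh0)
    calc (tU ^ (p - 1) * tV) ^ (1/p) ≤ (C ^ p) ^ (1/p) :=
          Real.rpow_le_rpow hXnn h6 (by positivity)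
      _ = C := by rw [one_div, Real.rpow_rpow_inv hC0 hp0.ne']
  calc tU ^ (p - 1) * tV = ((tU ^ (p - 1) * tV) ^ (1/p)) ^ p := by
        rw [one_div, Real.rpow_inv_rpow hXnn hp0.ne']
    _ ≤ _ ^ p := Real.rpow_le_rpow (Real.rpow_nonneg hXnn _) hmle hp0.le

lemma partD {V : Type} [Fintype V] [PartialOrder V] (hT : IsRootedTree V)
    {p p' : ℝ} (hpq : Real.HolderConjugate p p')
    (u w : ℕ → ℝ) (hu : ∀ j, 0 < u j) (hw : ∀ j, 0 < w j)
    (j₀ N : ℕ)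
    (nh : ℕ → ℝ) (hnh : ∀ i, 0 < nh i)
    (Cstar2 : ℝ) (hCstar2 : 0 ≤ Cstar2)
    (ξs : V) (hdξs : treeDepth ξs = j₀)
    (hdep : ∀ ξ : V, treeDepth ξ ≤ N)
    (hcard2 : ∀ ξ' : V, ξs ≤ ξ' → ∀ j, treeDepth ξ' ≤ j →
      ((Finset.univ.filter (fun ξ : V => ξ' ≤ ξ ∧ treeDepth ξ = j)).card : ℝ)
        ≤ Cstar2 * (nh j * (nh (treeDepth ξ'))⁻¹))
    (G : ℝ) (hG : 0 ≤ G)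
    (hkey : ∀ j1, j₀ ≤ j1 → j1 ≤ N →
      (∑ l ∈ Icc j₀ j1, u l ^ p' * nh l ^ (-(p' - 1))) ^ (p - 1)
        * (∑ k ∈ Icc j1 N, nh k * w k ^ p) ≤ G) :
    SconstPQ p p (fun ξ : V => u (treeDepth ξ)) (fun ξ : V => w (treeDepth ξ)) ξs
      ≤ (Cstar2 * p * p' ^ (p - 1)) ^ (1/p) * G ^ (1/p) := by
  classical
  have hp : 1 < p := hpq.lt
  have hp0 : (0:ℝ) < p := lt_trans one_pos hp
  have hp'1 : 1 < p' := hpq.symm.lt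
  have hp'0 : (0:ℝ) < p' := lt_trans one_pos hp'1
  set r : ℝ := 1/p' with hrdef
  have hr0 : 0 < r := by positivity
  have hr1 : r < 1 := by rw [hrdef]; rw [div_lt_one hp'0]; exact hp'1
  have hrp' : r * p' = 1 := by rw [hrdef]; field_simp
  have hrm1 : r - 1 = -(1/p) := by
    have := hpq.symm.inv_sub_one
    rw [hrdef, one_div, one_div, this]
  have hrp : r * p = p - 1 := by
    have h1 : (p - 1) * p' = p := hpq.sub_one_mul_conj
    rw [hrdef]
    field_simp
    linarith [h1]
  have hpm1 : (0:ℝ) < p - 1 := by linarith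
  -- basic sequences
  set A : ℕ → ℝ := fun l => u l ^ p' * nh l ^ (-(p' - 1)) with hA
  have hApos : ∀ l, 0 < A l := fun l =>
    mul_pos (Real.rpow_pos_of_pos (hu l) p') (Real.rpow_pos_of_pos (hnh l) _)
  set tU : ℕ → ℝ := fun i => ∑ l ∈ Icc j₀ i, A l with htUdef
  set tV : ℕ → ℝ := fun j => ∑ k ∈ Icc j N, nh k * w k ^ p with htVdef
  have htUnn : ∀ i, 0 ≤ tU i := fun i => Finset.sum_nonneg (fun l _ => (hApos l).le)
  have htUpos : ∀ i, j₀ ≤ i → 0 < tU i := fun i hi =>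
    Finset.sum_pos (fun l _ => hApos l) (by simp [hi])
  have htVnn : ∀ j, 0 ≤ tV j := fun j =>
    Finset.sum_nonneg (fun k _ => (mul_pos (hnh k) (Real.rpow_pos_of_pos (hw k) p)).le)
  have htVpos : ∀ j, j ≤ N → 0 < tV j := fun j hj =>
    Finset.sum_pos (fun k _ => mul_pos (hnh k) (Real.rpow_pos_of_pos (hw k) p))
      (by simp [hj])
  have hkey' : ∀ j1, j₀ ≤ j1 → j1 ≤ N → tU j1 ^ (p-1) * tV j1 ≤ G := hkey
  -- the admissible-set membership
  set K : ℝ := Cstar2 * p * p' ^ (p - 1) with hKdef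
  have hKnn : 0 ≤ K := by
    apply mul_nonneg (mul_nonneg hCstar2 hp0.le)
    exact (Real.rpow_pos_of_pos hp'0 _).le
  have hbdd : BddBelow {C : ℝ | 0 ≤ C ∧ ∀ f : V → ℝ, (∀ ξ : V, 0 ≤ f ξ) →
      (∑ ξ ∈ Finset.univ.filter (fun ξ : V => ξs ≤ ξ),
          w (treeDepth ξ) ^ p * (∑ ξ' ∈ Finset.univ.filter (fun ξ' : V => ξs ≤ ξ' ∧ ξ' ≤ ξ),
            u (treeDepth ξ') * f ξ') ^ p) ^ (1 / p)
        ≤ C * (∑ ξ ∈ Finset.univ.filter (fun ξ : V => ξs ≤ ξ), f ξ ^ p) ^ (1 / p)} :=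
    ⟨0, fun x hx => hx.1⟩
  unfold SconstPQ
  apply csInf_le hbdd
  constructor
  · positivity
  intro f hf
  set Afil : Finset V := Finset.univ.filter (fun ξ : V => ξs ≤ ξ) with hAfil
  have hdmem : ∀ ξ ∈ Afil, j₀ ≤ treeDepth ξ ∧ treeDepth ξ ≤ N := by
    intro ξ hξ
    rw [hAfil, Finset.mem_filter] at hξ
    exact ⟨hdξs ▸ treeDepth_le_of_le hξ.2, hdep ξ⟩
  set F : ℝ := ∑ ξ ∈ Afil, f ξ ^ p with hFdef
  have hFnn : 0 ≤ F := Finset.sum_nonneg (fun ξ _ => Real.rpow_nonneg (hf ξ) p)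
  -- Hölder auxiliary functions
  set x : V → ℝ := fun η => A (treeDepth η) ^ r * tU (treeDepth η) ^ ((r - 1) * r) with hxdef
  set y : V → ℝ := fun η => u (treeDepth η) * (A (treeDepth η) ^ r)⁻¹
      * (tU (treeDepth η) ^ ((r - 1) * r))⁻¹ * f η with hydef
  have hxnn : ∀ η, 0 ≤ x η := fun η =>
    mul_nonneg (Real.rpow_nonneg (hApos _).le _) (Real.rpow_nonneg (htUnn _) _)
  have hynn : ∀ η, 0 ≤ y η := fun η => by
    apply mul_nonneg _ (hf η)
    apply mul_nonneg
    · exact mul_nonneg (hu _).le (inv_nonneg.2 (Real.rpow_nonneg (hApos _).le _))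
    · exact inv_nonneg.2 (Real.rpow_nonneg (htUnn _) _)
  have hxy : ∀ η : V, j₀ ≤ treeDepth η → x η * y η = u (treeDepth η) * f η := by
    intro η hη
    show (A (treeDepth η) ^ r * tU (treeDepth η) ^ ((r - 1) * r))
        * (u (treeDepth η) * (A (treeDepth η) ^ r)⁻¹
          * (tU (treeDepth η) ^ ((r - 1) * r))⁻¹ * f η) = _
    have h1 : A (treeDepth η) ^ r ≠ 0 := (Real.rpow_pos_of_pos (hApos _) _).ne'
    have h2 : tU (treeDepth η) ^ ((r - 1) * r) ≠ 0 :=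
      (Real.rpow_pos_of_pos (htUpos _ hη) _).ne'
    field_simp
    rw [mul_assoc, mul_div_cancel_left₀ _ (by rw [mul_comm r]; exact h2)]
  have hxp' : ∀ η : V, x η ^ p' = (fun i => A i * tU i ^ (r - 1)) (treeDepth η) := by
    intro η
    show (A (treeDepth η) ^ r * tU (treeDepth η) ^ ((r - 1) * r)) ^ p' = _
    rw [Real.mul_rpow (Real.rpow_nonneg (hApos _).le _) (Real.rpow_nonneg (htUnn _) _),
      ← Real.rpow_mul (hApos _).le, ← Real.rpow_mul (htUnn _), hrp']
    rw [Real.rpow_one]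
    have : (r - 1) * r * p' = r - 1 := by
      rw [mul_assoc, hrp', mul_one]
    rw [this]
  have hconj2 : (p' - 1) * (p - 1) = 1 := by
    have h1 : (p - 1) * p' = p := hpq.sub_one_mul_conj
    nlinarith
  have hconj1 : (p - 1) * p' = p := hpq.sub_one_mul_conj
  have hyAm : ∀ i, A i ^ (-(r * p)) = (u i ^ p)⁻¹ * nh i := by
    intro i
    show (u i ^ p' * nh i ^ (-(p' - 1))) ^ (-(r * p)) = _
    rw [Real.mul_rpow (Real.rpow_nonneg (hu i).le _) (Real.rpow_nonneg (hnh i).le _),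
      ← Real.rpow_mul (hu i).le, ← Real.rpow_mul (hnh i).le, hrp]
    have e1 : p' * -(p - 1) = -p := by
      rw [mul_neg, mul_comm, hconj1]
    have e2 : -(p' - 1) * -(p - 1) = 1 := by
      rw [neg_mul_neg, hconj2]
    rw [e1, e2, Real.rpow_one, Real.rpow_neg (hu i).le]
  have hyp : ∀ η : V, y η ^ p
      = nh (treeDepth η) * tU (treeDepth η) ^ r * f η ^ p := by
    intro η
    show (u (treeDepth η) * (A (treeDepth η) ^ r)⁻¹
        * (tU (treeDepth η) ^ ((r - 1) * r))⁻¹ * f η) ^ p = _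
    set i := treeDepth η with hidef
    have hA1 : (0:ℝ) ≤ (A i ^ r)⁻¹ := inv_nonneg.2 (Real.rpow_nonneg (hApos _).le _)
    have hT1 : (0:ℝ) ≤ (tU i ^ ((r - 1) * r))⁻¹ := inv_nonneg.2 (Real.rpow_nonneg (htUnn _) _)
    rw [Real.mul_rpow (mul_nonneg (mul_nonneg (hu i).le hA1) hT1) (hf η),
      Real.mul_rpow (mul_nonneg (hu i).le hA1) hT1,
      Real.mul_rpow (hu i).le hA1,
      ← Real.rpow_neg (hApos i).le, ← Real.rpow_neg (htUnn i),
      ← Real.rpow_mul (hApos i).le, ← Real.rpow_mul (htUnn i)]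
    have e3 : -r * p = -(r * p) := by ring
    have e4 : -((r - 1) * r) * p = r := by
      have : r - 1 = -(1/p) := hrm1
      rw [this]
      field_simp
    rw [e3, e4, hyAm i]
    have hne : u i ^ p ≠ 0 := (Real.rpow_pos_of_pos (hu i) p).ne'
    field_simp
    try ring
  -- Step 1 : pointwise chain estimate
  have hstep1 : ∀ ξ ∈ Afil,
      (∑ η ∈ Finset.univ.filter (fun η : V => ξs ≤ η ∧ η ≤ ξ), u (treeDepth η) * f η) ^ p
        ≤ p' ^ (p - 1) * tU (treeDepth ξ) ^ (r * (p - 1))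
          * ∑ η ∈ Finset.univ.filter (fun η : V => ξs ≤ η ∧ η ≤ ξ),
              (nh (treeDepth η) * tU (treeDepth η) ^ r * f η ^ p) := by
    intro ξ hξ
    have hξs : ξs ≤ ξ := by
      rw [hAfil, Finset.mem_filter] at hξ; exact hξ.2
    have hmem : ∀ η ∈ Finset.univ.filter (fun η : V => ξs ≤ η ∧ η ≤ ξ),
        j₀ ≤ treeDepth η := by
      intro η hη
      rw [Finset.mem_filter] at hη
      exact hdξs ▸ treeDepth_le_of_le hη.2.1
    have hmN := hdmem ξ hξ
    have h1 : ∑ η ∈ Finset.univ.filter (fun η : V => ξs ≤ η ∧ η ≤ ξ),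
        u (treeDepth η) * f η
        = ∑ η ∈ Finset.univ.filter (fun η : V => ξs ≤ η ∧ η ≤ ξ), x η * y η :=
      Finset.sum_congr rfl (fun η hη => (hxy η (hmem η hη)).symm)
    have h2 := Real.inner_le_Lp_mul_Lq_of_nonneg
      (Finset.univ.filter (fun η : V => ξs ≤ η ∧ η ≤ ξ)) hpq.symm
      (fun η _ => hxnn η) (fun η _ => hynn η)
    have hSxnn : 0 ≤ ∑ η ∈ Finset.univ.filter (fun η : V => ξs ≤ η ∧ η ≤ ξ), x η ^ p' :=
      Finset.sum_nonneg (fun η _ => Real.rpow_nonneg (hxnn η) _)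
    have hSynn : 0 ≤ ∑ η ∈ Finset.univ.filter (fun η : V => ξs ≤ η ∧ η ≤ ξ), y η ^ p :=
      Finset.sum_nonneg (fun η _ => Real.rpow_nonneg (hynn η) _)
    have h3 : ∑ η ∈ Finset.univ.filter (fun η : V => ξs ≤ η ∧ η ≤ ξ), x η ^ p'
        ≤ p' * tU (treeDepth ξ) ^ r := by
      calc ∑ η ∈ Finset.univ.filter (fun η : V => ξs ≤ η ∧ η ≤ ξ), x η ^ p'
          = ∑ η ∈ Finset.univ.filter (fun η : V => ξs ≤ η ∧ η ≤ ξ),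
              (fun i => A i * tU i ^ (r - 1)) (treeDepth η) :=
            Finset.sum_congr rfl (fun η _ => hxp' η)
        _ = ∑ i ∈ Icc (treeDepth ξs) (treeDepth ξ), (fun i => A i * tU i ^ (r - 1)) i :=
            chain_reindex hT hξs (fun i => A i * tU i ^ (r - 1))
        _ ≤ r⁻¹ * tU (treeDepth ξ) ^ r := by
            rw [hdξs]
            exact tel_inc hr0 hr1 A hApos j₀ (treeDepth ξ) hmN.1
        _ = p' * tU (treeDepth ξ) ^ r := by rw [hrdef, one_div, inv_inv]
    have hcsnn : 0 ≤ ∑ η ∈ Finset.univ.filter (fun η : V => ξs ≤ η ∧ η ≤ ξ),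
        u (treeDepth η) * f η :=
      Finset.sum_nonneg (fun η _ => mul_nonneg (hu _).le (hf η))
    calc (∑ η ∈ Finset.univ.filter (fun η : V => ξs ≤ η ∧ η ≤ ξ), u (treeDepth η) * f η) ^ p
        ≤ ((∑ η ∈ Finset.univ.filter (fun η : V => ξs ≤ η ∧ η ≤ ξ), x η ^ p') ^ (1/p')
            * (∑ η ∈ Finset.univ.filter (fun η : V => ξs ≤ η ∧ η ≤ ξ), y η ^ p) ^ (1/p)) ^ p := by
          apply Real.rpow_le_rpow hcsnn _ hp0.le
          exact (le_of_eq h1).trans h2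
      _ = ((∑ η ∈ Finset.univ.filter (fun η : V => ξs ≤ η ∧ η ≤ ξ), x η ^ p') ^ (1/p')) ^ p
            * (∑ η ∈ Finset.univ.filter (fun η : V => ξs ≤ η ∧ η ≤ ξ), y η ^ p) := by
          rw [Real.mul_rpow (Real.rpow_nonneg hSxnn _) (Real.rpow_nonneg hSynn _)]
          congr 1
          rw [one_div, Real.rpow_inv_rpow hSynn hp0.ne']
      _ = (∑ η ∈ Finset.univ.filter (fun η : V => ξs ≤ η ∧ η ≤ ξ), x η ^ p') ^ (p - 1)
            * (∑ η ∈ Finset.univ.filter (fun η : V => ξs ≤ η ∧ η ≤ ξ), y η ^ p) := by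
          rw [← Real.rpow_mul hSxnn, show (1/p') * p = p - 1 from by rw [← hrdef]; exact hrp]
      _ ≤ (p' * tU (treeDepth ξ) ^ r) ^ (p - 1)
            * (∑ η ∈ Finset.univ.filter (fun η : V => ξs ≤ η ∧ η ≤ ξ), y η ^ p) := by
          apply mul_le_mul_of_nonneg_right _ hSynn
          exact Real.rpow_le_rpow hSxnn h3 hpm1.le
      _ = p' ^ (p - 1) * tU (treeDepth ξ) ^ (r * (p - 1))
            * (∑ η ∈ Finset.univ.filter (fun η : V => ξs ≤ η ∧ η ≤ ξ), y η ^ p) := by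
          rw [Real.mul_rpow hp'0.le (Real.rpow_nonneg (htUnn _) r),
            ← Real.rpow_mul (htUnn _)]
      _ = p' ^ (p - 1) * tU (treeDepth ξ) ^ (r * (p - 1))
            * ∑ η ∈ Finset.univ.filter (fun η : V => ξs ≤ η ∧ η ≤ ξ),
                (nh (treeDepth η) * tU (treeDepth η) ^ r * f η ^ p) := by
          congr 1
          exact Finset.sum_congr rfl (fun η _ => hyp η)
  -- Step 3 : inner tail estimate
  have htUj : ∀ j, j₀ ≤ j → j ≤ N → tU j ^ (r * (p - 1)) ≤ G ^ r * tV j ^ (-r) := by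
    intro j hjl hjr
    have htVj := htVpos j hjr
    have h1 : tU j ^ (p - 1) * tV j ≤ G := hkey' j hjl hjr
    have h2 : tU j ^ (p - 1) ≤ G * (tV j)⁻¹ := by
      rw [← div_eq_mul_inv]
      exact (le_div_iff₀ htVj).2 h1
    calc tU j ^ (r * (p - 1)) = (tU j ^ (p - 1)) ^ r := by
          rw [mul_comm, Real.rpow_mul (htUnn j)]
      _ ≤ (G * (tV j)⁻¹) ^ r :=
          Real.rpow_le_rpow (Real.rpow_nonneg (htUnn j) _) h2 hr0.le
      _ = G ^ r * tV j ^ (-r) := by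
          rw [Real.mul_rpow hG (inv_nonneg.2 htVj.le), Real.inv_rpow htVj.le,
            ← Real.rpow_neg htVj.le]
  have hIbound : ∀ η ∈ Afil,
      ∑ ξ ∈ Finset.univ.filter (fun ξ : V => η ≤ ξ),
        (fun i => w i ^ p * tU i ^ (r * (p - 1))) (treeDepth ξ)
        ≤ Cstar2 * (nh (treeDepth η))⁻¹ * G ^ r * (p * tV (treeDepth η) ^ (1/p)) := by
    intro η hη
    obtain ⟨hj'l, hj'r⟩ := hdmem η hη
    have hηξs : ξs ≤ η := by rw [hAfil, Finset.mem_filter] at hη; exact hη.2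
    calc ∑ ξ ∈ Finset.univ.filter (fun ξ : V => η ≤ ξ),
          (fun i => w i ^ p * tU i ^ (r * (p - 1))) (treeDepth ξ)
        = ∑ j ∈ Icc (treeDepth η) N,
            ∑ ξ ∈ (Finset.univ.filter (fun ξ : V => η ≤ ξ)).filter
              (fun ξ => treeDepth ξ = j),
            (fun i => w i ^ p * tU i ^ (r * (p - 1))) (treeDepth ξ) :=
          (Finset.sum_fiberwise_of_maps_to (fun ξ hξ => by
            rw [Finset.mem_filter] at hξ
            rw [Finset.mem_Icc]
            exact ⟨treeDepth_le_of_le hξ.2, hdep ξ⟩) _).symm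
      _ = ∑ j ∈ Icc (treeDepth η) N,
            (((Finset.univ.filter (fun ξ : V => η ≤ ξ)).filter
              (fun ξ => treeDepth ξ = j)).card : ℝ) * (w j ^ p * tU j ^ (r * (p - 1))) := by
          apply Finset.sum_congr rfl
          intro j hj
          rw [Finset.sum_congr rfl (fun ξ hξ => by
            show w (treeDepth ξ) ^ p * tU (treeDepth ξ) ^ (r * (p - 1)) = _
            rw [(Finset.mem_filter.1 hξ).2])]
          rw [Finset.sum_const, nsmul_eq_mul]
      _ ≤ ∑ j ∈ Icc (treeDepth η) N,
            (Cstar2 * (nh j * (nh (treeDepth η))⁻¹)) * (w j ^ p * (G ^ r * tV j ^ (-r))) := by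
          apply Finset.sum_le_sum
          intro j hj
          rw [Finset.mem_Icc] at hj
          have hcard := hcard2 η hηξs j hj.1
          have hfil : (Finset.univ.filter (fun ξ : V => η ≤ ξ)).filter
              (fun ξ => treeDepth ξ = j)
              = Finset.univ.filter (fun ξ : V => η ≤ ξ ∧ treeDepth ξ = j) := by
            rw [Finset.filter_filter]
          rw [hfil]
          apply mul_le_mul hcard
          · apply mul_le_mul_of_nonneg_left (htUj j (le_trans hj'l hj.1) hj.2)
            exact Real.rpow_nonneg (hw j).le p
          · apply mul_nonneg (Real.rpow_nonneg (hw j).le p)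
            exact Real.rpow_nonneg (htUnn j) _
          · apply mul_nonneg hCstar2
            exact mul_nonneg (hnh j).le (inv_nonneg.2 (hnh _).le)
      _ = Cstar2 * (nh (treeDepth η))⁻¹ * G ^ r
            * ∑ j ∈ Icc (treeDepth η) N, (nh j * w j ^ p) * tV j ^ (-r) := by
          rw [Finset.mul_sum]
          apply Finset.sum_congr rfl
          intro j _
          ring
      _ ≤ Cstar2 * (nh (treeDepth η))⁻¹ * G ^ r * (p * tV (treeDepth η) ^ (1/p)) := by
          apply mul_le_mul_of_nonneg_left _
            (mul_nonneg (mul_nonneg hCstar2 (inv_nonneg.2 (hnh _).le)) (Real.rpow_nonneg hG r))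
          have hteld := tel_dec (r := 1/p) (by positivity) (by rw [div_lt_one hp0]; exact hp)
            (fun k => nh k * w k ^ p)
            (fun k => mul_pos (hnh k) (Real.rpow_pos_of_pos (hw k) p)) N
            (N - treeDepth η) (treeDepth η) hj'r le_rfl
          have hexp : (1:ℝ)/p - 1 = -r := by
            rw [hrdef, one_div, one_div]
            exact hpq.inv_sub_one
          rw [hexp] at hteld
          calc ∑ j ∈ Icc (treeDepth η) N, (nh j * w j ^ p) * tV j ^ (-r)
              ≤ (1/p)⁻¹ * tV (treeDepth η) ^ (1/p) := hteld
            _ = p * tV (treeDepth η) ^ (1/p) := by rw [one_div, inv_inv]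
  -- combine everything
  have hr_eq : r = (p - 1) * (1 / p) := by
    rw [mul_one_div, eq_div_iff hp0.ne']
    exact hrp
  have htUtV : ∀ η ∈ Afil, tU (treeDepth η) ^ r * tV (treeDepth η) ^ (1/p) ≤ G ^ (1/p) := by
    intro η hη
    obtain ⟨hj'l, hj'r⟩ := hdmem η hη
    calc tU (treeDepth η) ^ r * tV (treeDepth η) ^ (1/p)
        = (tU (treeDepth η) ^ (p - 1)) ^ (1/p) * tV (treeDepth η) ^ (1/p) := by
          rw [hr_eq, Real.rpow_mul (htUnn _)]
      _ = (tU (treeDepth η) ^ (p - 1) * tV (treeDepth η)) ^ (1/p) :=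
          (Real.mul_rpow (Real.rpow_nonneg (htUnn _) _) (htVnn _)).symm
      _ ≤ G ^ (1/p) := by
          apply Real.rpow_le_rpow _ (hkey' _ hj'l hj'r) (by positivity)
          exact mul_nonneg (Real.rpow_nonneg (htUnn _) _) (htVnn _)
  have hG1 : G ^ r * G ^ (1/p) = G := by
    rcases eq_or_lt_of_le hG with h0 | hGpos
    · rw [← h0, Real.zero_rpow hr0.ne', zero_mul]
    · rw [← Real.rpow_add hGpos]
      have : r + 1/p = 1 := by
        rw [hrdef, one_div, one_div]
        linarith [hpq.inv_add_inv_eq_one]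
      rw [this, Real.rpow_one]
  have hcomm : ∀ ξ η : V, (ξ ∈ Afil ∧ η ∈ Finset.univ.filter (fun η : V => ξs ≤ η ∧ η ≤ ξ))
      ↔ (ξ ∈ Finset.univ.filter (fun ξ : V => η ≤ ξ) ∧ η ∈ Afil) := by
    intro ξ η
    rw [hAfil]
    simp only [Finset.mem_filter, Finset.mem_univ, true_and]
    constructor
    · rintro ⟨h1, h2, h3⟩; exact ⟨h3, h2⟩
    · rintro ⟨h1, h2⟩; exact ⟨le_trans h2 h1, h2, h1⟩
  have hc2nn : ∀ η : V, 0 ≤ nh (treeDepth η) * tU (treeDepth η) ^ r * f η ^ p := by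
    intro η
    apply mul_nonneg (mul_nonneg (hnh _).le (Real.rpow_nonneg (htUnn _) r))
    exact Real.rpow_nonneg (hf η) p
  have hW2nn : ∀ ξ : V, 0 ≤ w (treeDepth ξ) ^ p * tU (treeDepth ξ) ^ (r * (p - 1)) := by
    intro ξ
    exact mul_nonneg (Real.rpow_nonneg (hw _).le p) (Real.rpow_nonneg (htUnn _) _)
  have hmain : ∑ ξ ∈ Afil, w (treeDepth ξ) ^ p
      * (∑ ξ' ∈ Finset.univ.filter (fun ξ' : V => ξs ≤ ξ' ∧ ξ' ≤ ξ),
          u (treeDepth ξ') * f ξ') ^ p ≤ K * G * F := by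
    calc ∑ ξ ∈ Afil, w (treeDepth ξ) ^ p
        * (∑ ξ' ∈ Finset.univ.filter (fun ξ' : V => ξs ≤ ξ' ∧ ξ' ≤ ξ),
            u (treeDepth ξ') * f ξ') ^ p
        ≤ ∑ ξ ∈ Afil, w (treeDepth ξ) ^ p
            * (p' ^ (p - 1) * tU (treeDepth ξ) ^ (r * (p - 1))
              * ∑ η ∈ Finset.univ.filter (fun η : V => ξs ≤ η ∧ η ≤ ξ),
                  (nh (treeDepth η) * tU (treeDepth η) ^ r * f η ^ p)) := by
          apply Finset.sum_le_sum
          intro ξ hξ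
          exact mul_le_mul_of_nonneg_left (hstep1 ξ hξ) (Real.rpow_nonneg (hw _).le p)
      _ = p' ^ (p - 1) * ∑ ξ ∈ Afil,
            ∑ η ∈ Finset.univ.filter (fun η : V => ξs ≤ η ∧ η ≤ ξ),
              (w (treeDepth ξ) ^ p * tU (treeDepth ξ) ^ (r * (p - 1)))
                * (nh (treeDepth η) * tU (treeDepth η) ^ r * f η ^ p) := by
          conv_rhs => rw [Finset.mul_sum]
          apply Finset.sum_congr rfl
          intro ξ _
          rw [Finset.mul_sum, Finset.mul_sum]
          conv_rhs => rw [Finset.mul_sum]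
          apply Finset.sum_congr rfl
          intro η _
          ring
      _ = p' ^ (p - 1) * ∑ η ∈ Afil,
            ∑ ξ ∈ Finset.univ.filter (fun ξ : V => η ≤ ξ),
              (w (treeDepth ξ) ^ p * tU (treeDepth ξ) ^ (r * (p - 1)))
                * (nh (treeDepth η) * tU (treeDepth η) ^ r * f η ^ p) := by
          congr 1
          exact Finset.sum_comm' hcomm
      _ = p' ^ (p - 1) * ∑ η ∈ Afil,
            (∑ ξ ∈ Finset.univ.filter (fun ξ : V => η ≤ ξ),
              (fun i => w i ^ p * tU i ^ (r * (p - 1))) (treeDepth ξ))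
                * (nh (treeDepth η) * tU (treeDepth η) ^ r * f η ^ p) := by
          congr 1
          apply Finset.sum_congr rfl
          intro η _
          rw [Finset.sum_mul]
      _ ≤ p' ^ (p - 1) * ∑ η ∈ Afil,
            (Cstar2 * (nh (treeDepth η))⁻¹ * G ^ r * (p * tV (treeDepth η) ^ (1/p)))
              * (nh (treeDepth η) * tU (treeDepth η) ^ r * f η ^ p) := by
          apply mul_le_mul_of_nonneg_left _ (Real.rpow_nonneg hp'0.le _)
          apply Finset.sum_le_sum
          intro η hη
          exact mul_le_mul_of_nonneg_right (hIbound η hη) (hc2nn η)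
      _ = Cstar2 * p * p' ^ (p - 1) * G ^ r * ∑ η ∈ Afil,
            (tU (treeDepth η) ^ r * tV (treeDepth η) ^ (1/p)) * f η ^ p := by
          rw [Finset.mul_sum, Finset.mul_sum]
          apply Finset.sum_congr rfl
          intro η _
          have hnhne : nh (treeDepth η) ≠ 0 := (hnh _).ne'
          field_simp
      _ ≤ Cstar2 * p * p' ^ (p - 1) * G ^ r * ∑ η ∈ Afil, G ^ (1/p) * f η ^ p := by
          apply mul_le_mul_of_nonneg_left
          · apply Finset.sum_le_sum
            intro η hη
            exact mul_le_mul_of_nonneg_right (htUtV η hη) (Real.rpow_nonneg (hf η) p)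
          · apply mul_nonneg (mul_nonneg (mul_nonneg hCstar2 hp0.le)
              (Real.rpow_nonneg hp'0.le _)) (Real.rpow_nonneg hG r)
      _ = K * G * F := by
          rw [← Finset.mul_sum, ← hFdef, hKdef]
          rw [show Cstar2 * p * p' ^ (p - 1) * G ^ r * (G ^ (1/p) * F)
            = Cstar2 * p * p' ^ (p - 1) * (G ^ r * G ^ (1/p)) * F by ring]
          rw [hG1]
  -- finish : take 1/p-th powers
  have hSig : 0 ≤ ∑ ξ ∈ Afil, w (treeDepth ξ) ^ p
      * (∑ ξ' ∈ Finset.univ.filter (fun ξ' : V => ξs ≤ ξ' ∧ ξ' ≤ ξ),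
          u (treeDepth ξ') * f ξ') ^ p := by
    apply Finset.sum_nonneg
    intro ξ _
    apply mul_nonneg (Real.rpow_nonneg (hw _).le p)
    apply Real.rpow_nonneg
    exact Finset.sum_nonneg (fun η _ => mul_nonneg (hu _).le (hf η))
  calc (∑ ξ ∈ Afil, w (treeDepth ξ) ^ p
      * (∑ ξ' ∈ Finset.univ.filter (fun ξ' : V => ξs ≤ ξ' ∧ ξ' ≤ ξ),
          u (treeDepth ξ') * f ξ') ^ p) ^ (1/p)
      ≤ (K * G * F) ^ (1/p) := Real.rpow_le_rpow hSig hmain (by positivity)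
    _ = K ^ (1/p) * G ^ (1/p) * F ^ (1/p) := by
        rw [Real.mul_rpow (mul_nonneg hKnn hG) hFnn, Real.mul_rpow hKnn hG]

end St11

open St11 in
/-- comparison of Hardy constants between the original tree and the
regular reference tree `Â`: `𝔖_{A_{ξs},u,w} ≤ c · 𝔖_{Â,û,ŵ}`. -/
theorem statement11 (p : ℝ) (hp : 1 < p) (Cstar : ℝ) (hCstar : 1 ≤ Cstar) :
    ∃ σ₂ : ℝ, 0 < σ₂ ∧
    ∀ Chat : ℝ, 1 ≤ Chat →
    ∃ c : ℝ, 0 < c ∧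
    ∀ (V : Type) [Fintype V] [PartialOrder V], IsRootedTree V →
    ∀ N : ℕ, (∀ ξ : V, treeDepth ξ ≤ N) → (∃ ξ : V, treeDepth ξ = N) →
    ∀ ψ : ℕ → ℝ, (∀ j : ℕ, 0 ≤ ψ j) → Monotone ψ → ψ 0 = 0 →
    (∀ j₀ j : ℕ, j₀ ≤ j → ∀ ξ : V, treeDepth ξ = j₀ →
      (Nat.card {η : V // ξ ≤ η ∧ treeDepth η = j} : ℝ)
        ≤ Cstar * (2 : ℝ) ^ (ψ j - ψ j₀)) →
    (∀ ξ : V, (Nat.card {η : V // ξ ⋖ η} : ℝ) ≤ Chat) →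
    ∀ u w : ℕ → ℝ, (∀ j : ℕ, 0 < u j) → (∀ j : ℕ, 0 < w j) →
    (∀ j : ℕ, Chat⁻¹ ≤ u j / u (j + 1) ∧ u j / u (j + 1) ≤ Chat ∧
      Chat⁻¹ ≤ w j / w (j + 1) ∧ w j / w (j + 1) ≤ Chat) →
    ∀ σ : ℝ, 0 < σ → σ < σ₂ →
    (∀ j : ℕ, σ ^ (-((p - 1) / p)) * (u j * (2 : ℝ) ^ (-(ψ j) / p))
        ≤ u (j + 1) * (2 : ℝ) ^ (-(ψ (j + 1)) / p)) →
    (∀ j : ℕ, w (j + 1) * (2 : ℝ) ^ (ψ (j + 1) / p)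
        ≤ σ ^ (1 / p) * (w j * (2 : ℝ) ^ (ψ j / p))) →
    ∀ ξs : V, ∀ j₀ : ℕ, treeDepth ξs = j₀ →
    ∀ (Ahat : Type) [Fintype Ahat] [PartialOrder Ahat], IsRootedTree Ahat →
    ∀ ξhat : Ahat, (∀ η : Ahat, ξhat ≤ η) →
    (∀ η : Ahat, treeDepth η ≤ N - j₀) → (∃ η : Ahat, treeDepth η = N - j₀) →
    (∀ η : Ahat, treeDepth η < N - j₀ →
      (Nat.card {η' : Ahat // η ⋖ η'} : ℝ)
        = (2 : ℝ) ^ (psiStar ψ (j₀ + treeDepth η + 1) - psiStar ψ (j₀ + treeDepth η))) →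
    SconstPQ p p (fun ξ : V => u (treeDepth ξ)) (fun ξ : V => w (treeDepth ξ)) ξs
      ≤ c * SconstPQ p p (fun η : Ahat => u (j₀ + treeDepth η))
          (fun η : Ahat => w (j₀ + treeDepth η)) ξhat := by
  have hp0 : (0:ℝ) < p := lt_trans one_pos hp
  set p' : ℝ := Real.conjExponent p with hp'def
  have hpq : p.HolderConjugate p' := Real.HolderConjugate.conjExponent hp
  have hp'1 : 1 < p' := hpq.symm.lt
  have hp'0 : (0:ℝ) < p' := lt_trans one_pos hp'1
  refine ⟨1, one_pos, ?_⟩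
  intro Chat hChat
  set K : ℝ := 2 * Cstar * p * p' ^ (p - 1) with hKdef
  have hK1 : 1 ≤ K := by
    have h1 : (1:ℝ) ≤ p' ^ (p - 1) := by
      calc (1:ℝ) = p' ^ (0:ℝ) := (Real.rpow_zero p').symm
        _ ≤ p' ^ (p - 1) := Real.rpow_le_rpow_of_exponent_le hp'1.le (by linarith)
    have h2 : (1:ℝ) ≤ 2 * Cstar * p := by nlinarith
    calc (1:ℝ) = 1 * 1 := by ring
      _ ≤ (2 * Cstar * p) * (p' ^ (p - 1)) := mul_le_mul h2 h1 one_pos.le (by linarith)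
      _ = K := by rw [hKdef]
  refine ⟨K, lt_of_lt_of_le one_pos hK1, ?_⟩
  intro V instV1 instV2 htree N hdepN hNex ψ hψnn hψmono hψ0 hcard hchat u w hu hw hratio
    σ hσ0 hσ1 hσu hσw ξs j₀ hdξs Ahat instA1 instA2 htreehat ξhat hroothat hdephat
    hNexhat hbranch
  set ψs := psiStar ψ with hψsdef
  have hψb := psiStar_bounds ψ hψmono hψ0
  set nh : ℕ → ℝ := fun i => (2:ℝ) ^ (ψs i - ψs j₀) with hnhdef
  have hnh : ∀ i, 0 < nh i := fun i => Real.rpow_pos_of_pos two_pos _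
  have hj₀N : j₀ ≤ N := hdξs ▸ hdepN ξs
  have hlevel : ∀ k, k ≤ N - j₀ →
      ((Finset.univ.filter (fun η : Ahat => treeDepth η = k)).card : ℝ) = nh (j₀ + k) := by
    intro k
    induction k with
    | zero =>
        intro _
        rw [level_zero htreehat hroothat]
        rw [hnhdef]
        simp
    | succ k ih =>
        intro hk1
        have hkK : k ≤ N - j₀ := by omega
        have hkKlt : k < N - j₀ := by omega
        have hbrk : ∀ η : Ahat, treeDepth η = k →
            ((Nat.card {η' : Ahat // η ⋖ η'} : ℝ))
              = (2:ℝ) ^ (ψs (j₀ + k + 1) - ψs (j₀ + k)) := by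
          intro η hη
          have h := hbranch η (by rw [hη]; exact hkKlt)
          rw [hη] at h
          exact h
        rw [level_succ_card htreehat k _ hbrk, ih hkK]
        rw [hnhdef]
        dsimp only
        rw [← Real.rpow_add two_pos]
        congr 1
        have he : j₀ + (k + 1) = j₀ + k + 1 := by omega
        rw [he]
        ring
  set Shat := SconstPQ p p (fun η : Ahat => u (j₀ + treeDepth η))
      (fun η : Ahat => w (j₀ + treeDepth η)) ξhat with hShatdef
  have hShatnn : 0 ≤ Shat := Real.sInf_nonneg (fun x hx => hx.1)
  set G := Shat ^ p with hGdef
  have hG : 0 ≤ G := Real.rpow_nonneg hShatnn p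
  have hkey : ∀ j1, j₀ ≤ j1 → j1 ≤ N →
      (∑ l ∈ Finset.Icc j₀ j1, u l ^ p' * nh l ^ (-(p' - 1))) ^ (p - 1)
        * (∑ k ∈ Finset.Icc j1 N, nh k * w k ^ p) ≤ G :=
    fun j1 h1 h2 => partE htreehat hpq u w hu hw j₀ N hj₀N nh hnh ξhat hroothat
      hdephat hlevel j1 h1 h2
  have hcard2 : ∀ ξ' : V, ξs ≤ ξ' → ∀ j, treeDepth ξ' ≤ j →
      ((Finset.univ.filter (fun ξ : V => ξ' ≤ ξ ∧ treeDepth ξ = j)).card : ℝ)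
        ≤ (2 * Cstar) * (nh j * (nh (treeDepth ξ'))⁻¹) := by
    intro ξ' hξ' j hj
    have h1 := hcard (treeDepth ξ') j hj ξ' rfl
    rw [Nat.card_eq_fintype_card, Fintype.card_subtype] at h1
    have h2 : nh j * (nh (treeDepth ξ'))⁻¹ = (2:ℝ) ^ (ψs j - ψs (treeDepth ξ')) := by
      rw [hnhdef]
      dsimp only
      rw [← Real.rpow_neg two_pos.le, ← Real.rpow_add two_pos]
      congr 1
      ring
    have h3 : (2:ℝ) ^ (ψ j - ψ (treeDepth ξ'))
        ≤ 2 * (2:ℝ) ^ (ψs j - ψs (treeDepth ξ')) := by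
      have he : ψ j - ψ (treeDepth ξ') ≤ (ψs j - ψs (treeDepth ξ')) + 1 := by
        have hb1 := (hψb j).2
        have hb2 := (hψb (treeDepth ξ')).1
        linarith
      calc (2:ℝ) ^ (ψ j - ψ (treeDepth ξ'))
          ≤ (2:ℝ) ^ ((ψs j - ψs (treeDepth ξ')) + 1) :=
            Real.rpow_le_rpow_of_exponent_le one_le_two he
        _ = 2 * (2:ℝ) ^ (ψs j - ψs (treeDepth ξ')) := by
            rw [Real.rpow_add two_pos, Real.rpow_one]
            ring
    calc ((Finset.univ.filter (fun ξ : V => ξ' ≤ ξ ∧ treeDepth ξ = j)).card : ℝ)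
        ≤ Cstar * (2:ℝ) ^ (ψ j - ψ (treeDepth ξ')) := h1
      _ ≤ Cstar * (2 * (2:ℝ) ^ (ψs j - ψs (treeDepth ξ'))) :=
          mul_le_mul_of_nonneg_left h3 (by linarith)
      _ = (2 * Cstar) * (nh j * (nh (treeDepth ξ'))⁻¹) := by
          rw [h2]
          ring
  have hmain := partD htree hpq u w hu hw j₀ N nh hnh (2 * Cstar) (by linarith)
    ξs hdξs hdepN hcard2 G hG hkey
  have hGp : G ^ (1/p) = Shat := by
    rw [hGdef, one_div, Real.rpow_rpow_inv hShatnn hp0.ne']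
  have hKp : K ^ (1/p) ≤ K := by
    calc K ^ (1/p) ≤ K ^ (1:ℝ) :=
          Real.rpow_le_rpow_of_exponent_le hK1 (by rw [div_le_one hp0]; linarith)
      _ = K := Real.rpow_one K
  calc SconstPQ p p (fun ξ : V => u (treeDepth ξ)) (fun ξ : V => w (treeDepth ξ)) ξs
      ≤ (2 * Cstar * p * p' ^ (p - 1)) ^ (1/p) * G ^ (1/p) := hmain
    _ = K ^ (1/p) * Shat := by rw [hGp, ← hKdef]
    _ ≤ K * Shat := mul_le_mul_of_nonneg_right hKp hShatnn
end
end

section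
/- Let 1 < p < ∞, and let (Â, ξ̂) be a finite rooted tree in which the number of immediate successors of a vertex depends only on its depth. Let û, ŵ : V(Â) → (0, ∞) be level-constant weights (û(ξ) and ŵ(ξ) depend only on the depth of ξ). For f : V(Â) → [0, ∞) set ℱ(f) = ∑_{ξ ∈ V(Â)} ŵ(ξ)^p (∑_{ξ̂ ≤ ξ' ≤ ξ} û(ξ') f(ξ')^{1/p})^p. Then sup{ℱ(f) : f ≥ 0, ∑_{ξ} f(ξ) ≤ 1} = sup{ℱ(f) : f ≥ 0, ∑_{ξ} f(ξ) ≤ 1, and f(ξ') = f(ξ'') whenever ξ', ξ'' have the same depth}. -/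
open scoped Classical

noncomputable section

section TreeAux
set_option linter.unusedSectionVars false


variable {V : Type} [Fintype V] [PartialOrder V]

lemma treeDepth_eq_ncard (ξ : V) : treeDepth ξ = ({η | η < ξ} : Set V).ncard :=
  Nat.card_coe_set_eq _

lemma treeDepth_lt_of_lt {η ξ : V} (h : η < ξ) : treeDepth η < treeDepth ξ := by
  rw [treeDepth_eq_ncard, treeDepth_eq_ncard]
  refine Set.ncard_lt_ncard ?_ (Set.toFinite _)
  exact (Set.ssubset_iff_of_subset (fun ζ hζ => lt_trans hζ h)).mpr ⟨η, h, lt_irrefl η⟩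

lemma treeDepth_le_of_le {η ξ : V} (h : η ≤ ξ) : treeDepth η ≤ treeDepth ξ := by
  rcases h.lt_or_eq with h | h
  · exact (treeDepth_lt_of_lt h).le
  · rw [h]

lemma eq_of_depth_eq {ξ η₁ η₂ : V}
    (hch : ∀ ξ η₁ η₂ : V, η₁ ≤ ξ → η₂ ≤ ξ → η₁ ≤ η₂ ∨ η₂ ≤ η₁)
    (h1 : η₁ ≤ ξ) (h2 : η₂ ≤ ξ) (hd : treeDepth η₁ = treeDepth η₂) : η₁ = η₂ := by
  rcases hch ξ η₁ η₂ h1 h2 with h | h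
  · rcases h.lt_or_eq with h | h
    · exact absurd hd (Nat.ne_of_lt (treeDepth_lt_of_lt h))
    · exact h
  · rcases h.lt_or_eq with h | h
    · exact absurd hd.symm (Nat.ne_of_lt (treeDepth_lt_of_lt h))
    · exact h.symm

lemma ncard_le_eq (η : V) : ({ζ | ζ ≤ η} : Set V).ncard = treeDepth η + 1 := by
  have h : ({ζ | ζ ≤ η} : Set V) = insert η {ζ | ζ < η} := by
    ext ζ
    simp only [Set.mem_setOf_eq, Set.mem_insert_iff]
    constructor
    · intro hζ
      rcases hζ.lt_or_eq with h | h
      · exact Or.inr h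
      · exact Or.inl h
    · rintro (rfl | h)
      · exact le_rfl
      · exact h.le
  rw [h, Set.ncard_insert_of_notMem (by simp) (Set.toFinite _), treeDepth_eq_ncard]

lemma exists_anc
    (hch : ∀ ξ η₁ η₂ : V, η₁ ≤ ξ → η₂ ≤ ξ → η₁ ≤ η₂ ∨ η₂ ≤ η₁)
    (ξ : V) (i : ℕ) (hi : i ≤ treeDepth ξ) : ∃ η, η ≤ ξ ∧ treeDepth η = i := by
  suffices H : ∀ (n : ℕ) (ξ : V), treeDepth ξ ≤ n → ∀ i ≤ treeDepth ξ,
      ∃ η, η ≤ ξ ∧ treeDepth η = i from H (treeDepth ξ) ξ le_rfl i hi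
  intro n
  induction n with
  | zero => intro ξ h0 i hi; exact ⟨ξ, le_rfl, by omega⟩
  | succ n ih =>
    intro ξ hξ i hi
    rcases eq_or_lt_of_le hi with h | hi'
    · exact ⟨ξ, le_rfl, h.symm⟩
    · have hpos : 0 < treeDepth ξ := lt_of_le_of_lt (Nat.zero_le i) hi'
      have hne : ∃ η : V, η < ξ := by
        rw [treeDepth] at hpos
        obtain ⟨⟨η, hη⟩⟩ := (Nat.card_pos_iff.mp hpos).1
        exact ⟨η, hη⟩
      obtain ⟨η₀, hη₀⟩ := hne
      obtain ⟨η, hηmem, hηmax⟩ : ∃ η ∈ Finset.univ.filter (fun ζ : V => ζ < ξ),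
          ∀ ζ ∈ Finset.univ.filter (fun ζ : V => ζ < ξ), ¬ η < ζ := by
        obtain ⟨η, h1, h2⟩ :=
          Finset.exists_maximal (s := Finset.univ.filter fun ζ : V => ζ < ξ) ⟨η₀, by simp [hη₀]⟩
        exact ⟨η, h1, fun ζ hζ hlt => hlt.not_ge (h2 hζ hlt.le)⟩
      have hηξ : η < ξ := by simpa using hηmem
      have hset : ({ζ | ζ < ξ} : Set V) = {ζ | ζ ≤ η} := by
        ext ζ
        simp only [Set.mem_setOf_eq]
        constructor
        · intro hζ
          rcases hch ξ ζ η hζ.le hηξ.le with h | h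
          · exact h
          · rcases h.lt_or_eq with h' | h'
            · exact absurd h' (hηmax ζ (by simp [hζ]))
            · exact h'.ge
        · intro hζ; exact lt_of_le_of_lt hζ hηξ
      have hd : treeDepth ξ = treeDepth η + 1 := by
        rw [treeDepth_eq_ncard, hset, ncard_le_eq]
      obtain ⟨η', h1, h2⟩ := ih η (by omega) i (by omega)
      exact ⟨η', h1.trans hηξ.le, h2⟩

def tanc (ξ : V) (i : ℕ) : V :=
  if h : ∃ η : V, η ≤ ξ ∧ treeDepth η = i then h.choose else ξ

lemma tanc_le {ξ : V} {i : ℕ} (h : ∃ η : V, η ≤ ξ ∧ treeDepth η = i) :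
    tanc ξ i ≤ ξ ∧ treeDepth (tanc ξ i) = i := by
  rw [tanc, dif_pos h]; exact h.choose_spec

lemma tanc_spec
    (hch : ∀ ξ η₁ η₂ : V, η₁ ≤ ξ → η₂ ≤ ξ → η₁ ≤ η₂ ∨ η₂ ≤ η₁)
    {ξ : V} {i : ℕ} (hi : i ≤ treeDepth ξ) :
    tanc ξ i ≤ ξ ∧ treeDepth (tanc ξ i) = i :=
  tanc_le (exists_anc hch ξ i hi)

lemma tanc_eq
    (hch : ∀ ξ η₁ η₂ : V, η₁ ≤ ξ → η₂ ≤ ξ → η₁ ≤ η₂ ∨ η₂ ≤ η₁)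
    {ξ η : V} (hle : η ≤ ξ) : tanc ξ (treeDepth η) = η := by
  have hs := tanc_le ⟨η, hle, rfl⟩
  exact eq_of_depth_eq hch hs.1 hle hs.2

lemma covby_iff
    (hch : ∀ ξ η₁ η₂ : V, η₁ ≤ ξ → η₂ ≤ ξ → η₁ ≤ η₂ ∨ η₂ ≤ η₁)
    {ζ ξ : V} : ζ ⋖ ξ ↔ ζ ≤ ξ ∧ treeDepth ξ = treeDepth ζ + 1 := by
  constructor
  · intro h
    refine ⟨h.1.le, ?_⟩
    have hset : ({η | η < ξ} : Set V) = {η | η ≤ ζ} := by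
      ext η
      simp only [Set.mem_setOf_eq]
      constructor
      · intro hη
        rcases hch ξ η ζ hη.le h.1.le with h' | h'
        · exact h'
        · rcases h'.lt_or_eq with h'' | h''
          · exact absurd hη (h.2 h'')
          · exact h''.ge
      · intro hη; exact lt_of_le_of_lt hη h.1
    rw [treeDepth_eq_ncard, hset, ncard_le_eq]
  · rintro ⟨h1, h2⟩
    have hlt : ζ < ξ := h1.lt_of_ne (by intro h; rw [h] at h2; omega)
    refine ⟨hlt, fun η hζη hηξ => ?_⟩
    have t1 := treeDepth_lt_of_lt hζη
    have t2 := treeDepth_lt_of_lt hηξ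
    omega


lemma cnt_const
    (hch : ∀ ξ η₁ η₂ : V, η₁ ≤ ξ → η₂ ≤ ξ → η₁ ≤ η₂ ∨ η₂ ≤ η₁)
    (hregF : ∀ η η' : V, treeDepth η = treeDepth η' →
      (Finset.univ.filter fun ζ : V => η ⋖ ζ).card =
      (Finset.univ.filter fun ζ : V => η' ⋖ ζ).card) :
    ∀ (n : ℕ) (η η' : V), treeDepth η = treeDepth η' →
      (Finset.univ.filter fun ξ : V => η ≤ ξ ∧ treeDepth ξ = treeDepth η + n).card =
      (Finset.univ.filter fun ξ : V => η' ≤ ξ ∧ treeDepth ξ = treeDepth η' + n).card := by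
  intro n
  induction n with
  | zero =>
    have hone : ∀ η : V,
        (Finset.univ.filter fun ξ : V => η ≤ ξ ∧ treeDepth ξ = treeDepth η + 0).card = 1 := by
      intro η
      rw [Finset.card_eq_one]
      refine ⟨η, ?_⟩
      ext ξ
      simp only [Finset.mem_filter, Finset.mem_univ, true_and, Finset.mem_singleton, Nat.add_zero]
      constructor
      · rintro ⟨hle, hd⟩
        rcases hle.lt_or_eq with h | h
        · exact absurd hd (by have := treeDepth_lt_of_lt h; omega)
        · exact h.symm
      · rintro rfl; exact ⟨le_rfl, rfl⟩
    intro η η' _; rw [hone, hone]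
  | succ n ih =>
    intro η η' hd
    have hBA : ∀ μ : V,
        (Finset.univ.filter fun ξ : V => μ ≤ ξ ∧ treeDepth ξ = treeDepth μ + (n + 1)).card =
        ∑ ζ ∈ Finset.univ.filter (fun ζ : V => μ ≤ ζ ∧ treeDepth ζ = treeDepth μ + n),
          (Finset.univ.filter fun ξ : V => ζ ⋖ ξ).card := by
      intro μ
      rw [Finset.card_eq_sum_card_fiberwise
        (f := fun ξ : V => tanc ξ (treeDepth μ + n))
        (t := Finset.univ.filter fun ζ : V => μ ≤ ζ ∧ treeDepth ζ = treeDepth μ + n) ?_]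
      · refine Finset.sum_congr rfl fun ζ hζ => ?_
        simp only [Finset.mem_filter, Finset.mem_univ, true_and] at hζ
        congr 1
        ext ξ
        simp only [Finset.mem_filter, Finset.mem_univ, true_and]
        constructor
        · rintro ⟨⟨hle, hdξ⟩, htanc⟩
          have hsp := tanc_spec hch (ξ := ξ) (i := treeDepth μ + n) (by omega)
          rw [htanc] at hsp
          rw [covby_iff hch]
          exact ⟨hsp.1, by omega⟩
        · intro hcov
          rw [covby_iff hch] at hcov
          have hdξ : treeDepth ξ = treeDepth μ + (n + 1) := by omega
          refine ⟨⟨hζ.1.trans hcov.1, hdξ⟩, ?_⟩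
          have h0 := tanc_eq hch hcov.1
          rw [hζ.2] at h0
          exact h0
      · intro ξ hξ
        simp only [Finset.mem_coe, Finset.mem_filter, Finset.mem_univ, true_and] at hξ ⊢
        obtain ⟨hle, hdξ⟩ := hξ
        have hsp := tanc_spec hch (ξ := ξ) (i := treeDepth μ + n) (by omega)
        refine ⟨?_, hsp.2⟩
        rcases hch ξ μ (tanc ξ (treeDepth μ + n)) hle hsp.1 with h | h
        · exact h
        · have h1 : treeDepth (tanc ξ (treeDepth μ + n)) ≤ treeDepth μ := treeDepth_le_of_le h
          rw [hsp.2] at h1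
          exact (eq_of_depth_eq hch hsp.1 hle (by omega)).ge
    rw [hBA η, hBA η']
    rcases Finset.eq_empty_or_nonempty
        (Finset.univ.filter fun ζ : V => η ≤ ζ ∧ treeDepth ζ = treeDepth η + n) with he | hne
    · have h2 : (Finset.univ.filter fun ζ : V => η' ≤ ζ ∧ treeDepth ζ = treeDepth η' + n) = ∅ := by
        rw [← Finset.card_eq_zero, ← ih η η' hd, he, Finset.card_empty]
      rw [he, h2]
    · obtain ⟨ζ₀, hζ₀⟩ := hne
      simp only [Finset.mem_filter, Finset.mem_univ, true_and] at hζ₀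
      have hsum : ∀ μ : V, treeDepth μ = treeDepth η →
          ∑ ζ ∈ Finset.univ.filter (fun ζ : V => μ ≤ ζ ∧ treeDepth ζ = treeDepth μ + n),
            (Finset.univ.filter fun ξ : V => ζ ⋖ ξ).card =
          (Finset.univ.filter (fun ζ : V => μ ≤ ζ ∧ treeDepth ζ = treeDepth μ + n)).card *
            (Finset.univ.filter fun ξ : V => ζ₀ ⋖ ξ).card := by
        intro μ hμ
        rw [Finset.sum_congr rfl fun ζ hζ => hregF ζ ζ₀ (by
          simp only [Finset.mem_filter, Finset.mem_univ, true_and] at hζ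
          omega)]
        rw [Finset.sum_const, smul_eq_mul]
      rw [hsum η rfl, hsum η' hd.symm, ih η η' hd]

lemma key_real {κ : Type} {p : ℝ} (hp : 1 ≤ p) (K : Finset κ) (I : Finset ℕ)
    (c : ℕ → ℝ) (hc : ∀ i, 0 ≤ c i) (y : ℕ → κ → ℝ) (hy : ∀ i k, 0 ≤ y i k) :
    ∑ k ∈ K, (∑ i ∈ I, c i * y i k ^ (1 / p)) ^ p ≤
      (∑ i ∈ I, c i * (∑ k ∈ K, y i k) ^ (1 / p)) ^ p := by
  have hp0 : (0:ℝ) < p := lt_of_lt_of_le one_pos hp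
  have main : ∀ I : Finset ℕ,
      (∑ k ∈ K, (∑ i ∈ I, c i * y i k ^ (1 / p)) ^ p) ^ (1 / p) ≤
        ∑ i ∈ I, c i * (∑ k ∈ K, y i k) ^ (1 / p) := by
    intro I
    induction I using Finset.cons_induction with
    | empty =>
      simp only [Finset.sum_empty, Real.zero_rpow hp0.ne', Finset.sum_const_zero]
      rw [Real.zero_rpow (by positivity : (1:ℝ)/p ≠ 0)]
    | cons a s ha ih =>
      simp only [Finset.sum_cons]
      have h1 : ∀ k ∈ K, 0 ≤ c a * y a k ^ (1 / p) :=
        fun k _ => mul_nonneg (hc a) (Real.rpow_nonneg (hy a k) _)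
      have h2 : ∀ k ∈ K, 0 ≤ ∑ i ∈ s, c i * y i k ^ (1 / p) :=
        fun k _ => Finset.sum_nonneg fun i _ => mul_nonneg (hc i) (Real.rpow_nonneg (hy i k) _)
      calc (∑ k ∈ K, (c a * y a k ^ (1 / p) + ∑ i ∈ s, c i * y i k ^ (1 / p)) ^ p) ^ (1 / p)
          ≤ (∑ k ∈ K, (c a * y a k ^ (1 / p)) ^ p) ^ (1 / p) +
            (∑ k ∈ K, (∑ i ∈ s, c i * y i k ^ (1 / p)) ^ p) ^ (1 / p) :=
            Real.Lp_add_le_of_nonneg (s := K) hp h1 h2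
        _ ≤ c a * (∑ k ∈ K, y a k) ^ (1 / p) + ∑ i ∈ s, c i * (∑ k ∈ K, y i k) ^ (1 / p) := by
            refine add_le_add (le_of_eq ?_) ih
            have h3 : ∀ k ∈ K, (c a * y a k ^ (1 / p)) ^ p = c a ^ p * y a k := by
              intro k _
              rw [Real.mul_rpow (hc a) (Real.rpow_nonneg (hy a k) _),
                ← Real.rpow_mul (hy a k), one_div_mul_cancel hp0.ne', Real.rpow_one]
            rw [Finset.sum_congr rfl h3, ← Finset.mul_sum,
              Real.mul_rpow (Real.rpow_nonneg (hc a) _)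
                (Finset.sum_nonneg fun k _ => hy a k),
              ← Real.rpow_mul (hc a), mul_one_div_cancel hp0.ne', Real.rpow_one]
  have hL0 : 0 ≤ ∑ k ∈ K, (∑ i ∈ I, c i * y i k ^ (1 / p)) ^ p :=
    Finset.sum_nonneg fun k _ => Real.rpow_nonneg
      (Finset.sum_nonneg fun i _ => mul_nonneg (hc i) (Real.rpow_nonneg (hy i k) _)) _
  calc ∑ k ∈ K, (∑ i ∈ I, c i * y i k ^ (1 / p)) ^ p
      = ((∑ k ∈ K, (∑ i ∈ I, c i * y i k ^ (1 / p)) ^ p) ^ (1 / p)) ^ p := by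
        rw [← Real.rpow_mul hL0, one_div_mul_cancel hp0.ne', Real.rpow_one]
    _ ≤ (∑ i ∈ I, c i * (∑ k ∈ K, y i k) ^ (1 / p)) ^ p :=
        Real.rpow_le_rpow (Real.rpow_nonneg hL0 _) (main I) hp0.le


def levSet (V : Type) [Fintype V] [PartialOrder V] (j : ℕ) : Finset V :=
  Finset.univ.filter fun ξ => treeDepth ξ = j

lemma mem_levSet {j : ℕ} {ξ : V} : ξ ∈ levSet V j ↔ treeDepth ξ = j := by
  simp [levSet]

lemma sum_level_fiber (g : V → ℝ) :
    ∑ ξ : V, g ξ = ∑ j ∈ Finset.univ.image (treeDepth (V := V)), ∑ ξ ∈ levSet V j, g ξ := by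
  rw [← Finset.sum_fiberwise_of_maps_to (g := treeDepth)
    (t := Finset.univ.image (treeDepth (V := V)))
    (fun ξ _ => Finset.mem_image_of_mem _ (Finset.mem_univ ξ)) g]
  rfl

def Ffun (p : ℝ) {V : Type} [Fintype V] [PartialOrder V] (ξhat : V) (U W : ℕ → ℝ)
    (f : V → ℝ) : ℝ :=
  ∑ ξ : V, W (treeDepth ξ) ^ p *
    (∑ ξ' ∈ Finset.univ.filter (fun ξ' : V => ξhat ≤ ξ' ∧ ξ' ≤ ξ),
      U (treeDepth ξ') * f ξ' ^ (1 / p)) ^ p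


end TreeAux

/-- symmetrization: on a regular rooted tree (the number of immediate
successors depends only on the depth) with level-constant weights, the supremum of the
concave functional `ℱ` over the unit simplex is attained on level-constant functions. -/
theorem statement12 (p : ℝ) (hp : 1 < p)
    (V : Type) [Fintype V] [PartialOrder V] (htree : IsRootedTree V)
    (ξhat : V) (hroot : ∀ η : V, ξhat ≤ η)
    (hreg : ∀ η η' : V, treeDepth η = treeDepth η' →
      Nat.card {ζ : V // η ⋖ ζ} = Nat.card {ζ : V // η' ⋖ ζ})
    (U W : ℕ → ℝ) (hU : ∀ j : ℕ, 0 < U j) (hW : ∀ j : ℕ, 0 < W j) :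
    sSup {y : ℝ | ∃ f : V → ℝ, (∀ ξ : V, 0 ≤ f ξ) ∧ (∑ ξ : V, f ξ) ≤ 1 ∧
        y = ∑ ξ : V, W (treeDepth ξ) ^ p *
          (∑ ξ' ∈ Finset.univ.filter (fun ξ' : V => ξhat ≤ ξ' ∧ ξ' ≤ ξ),
            U (treeDepth ξ') * f ξ' ^ (1 / p)) ^ p}
    = sSup {y : ℝ | ∃ f : V → ℝ, (∀ ξ : V, 0 ≤ f ξ) ∧ (∑ ξ : V, f ξ) ≤ 1 ∧
        (∀ ξ ξ' : V, treeDepth ξ = treeDepth ξ' → f ξ = f ξ') ∧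
        y = ∑ ξ : V, W (treeDepth ξ) ^ p *
          (∑ ξ' ∈ Finset.univ.filter (fun ξ' : V => ξhat ≤ ξ' ∧ ξ' ≤ ξ),
            U (treeDepth ξ') * f ξ' ^ (1 / p)) ^ p} := by
  have hch := htree.2
  have hp0 : (0:ℝ) < p := lt_trans one_pos hp
  have hregF : ∀ η η' : V, treeDepth η = treeDepth η' →
      (Finset.univ.filter fun ζ : V => η ⋖ ζ).card =
      (Finset.univ.filter fun ζ : V => η' ⋖ ζ).card := by
    intro η η' h
    have h2 := hreg η η' h
    simpa [Nat.card_eq_fintype_card, Fintype.card_subtype] using h2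
  show sSup {y : ℝ | ∃ f : V → ℝ, (∀ ξ : V, 0 ≤ f ξ) ∧ (∑ ξ : V, f ξ) ≤ 1 ∧
        y = Ffun p ξhat U W f}
    = sSup {y : ℝ | ∃ f : V → ℝ, (∀ ξ : V, 0 ≤ f ξ) ∧ (∑ ξ : V, f ξ) ≤ 1 ∧
        (∀ ξ ξ' : V, treeDepth ξ = treeDepth ξ' → f ξ = f ξ') ∧ y = Ffun p ξhat U W f}
  -- boundedness
  have hFle : ∀ f : V → ℝ, (∀ ξ, 0 ≤ f ξ) → (∑ ξ : V, f ξ) ≤ 1 →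
      Ffun p ξhat U W f ≤ ∑ ξ : V, W (treeDepth ξ) ^ p *
        (∑ ξ' ∈ Finset.univ.filter (fun ξ' : V => ξhat ≤ ξ' ∧ ξ' ≤ ξ),
          U (treeDepth ξ')) ^ p := by
    intro f hf hsum
    refine Finset.sum_le_sum fun ξ _ => ?_
    refine mul_le_mul_of_nonneg_left ?_ (Real.rpow_nonneg (hW _).le _)
    refine Real.rpow_le_rpow (Finset.sum_nonneg fun η _ =>
      mul_nonneg (hU _).le (Real.rpow_nonneg (hf η) _)) ?_ hp0.le
    refine Finset.sum_le_sum fun η _ => ?_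
    have hfle1 : f η ≤ 1 :=
      le_trans (Finset.single_le_sum (fun ξ _ => hf ξ) (Finset.mem_univ η)) hsum
    calc U (treeDepth η) * f η ^ (1 / p)
        ≤ U (treeDepth η) * 1 :=
          mul_le_mul_of_nonneg_left (Real.rpow_le_one (hf η) hfle1 (by positivity)) (hU _).le
      _ = U (treeDepth η) := mul_one _
  have hbddA : BddAbove {y : ℝ | ∃ f : V → ℝ, (∀ ξ : V, 0 ≤ f ξ) ∧ (∑ ξ : V, f ξ) ≤ 1 ∧
      y = Ffun p ξhat U W f} := by
    refine ⟨∑ ξ : V, W (treeDepth ξ) ^ p *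
      (∑ ξ' ∈ Finset.univ.filter (fun ξ' : V => ξhat ≤ ξ' ∧ ξ' ≤ ξ),
        U (treeDepth ξ')) ^ p, ?_⟩
    rintro y ⟨f, hf1, hf2, rfl⟩
    exact hFle f hf1 hf2
  have hsub : {y : ℝ | ∃ f : V → ℝ, (∀ ξ : V, 0 ≤ f ξ) ∧ (∑ ξ : V, f ξ) ≤ 1 ∧
        (∀ ξ ξ' : V, treeDepth ξ = treeDepth ξ' → f ξ = f ξ') ∧ y = Ffun p ξhat U W f}
      ⊆ {y : ℝ | ∃ f : V → ℝ, (∀ ξ : V, 0 ≤ f ξ) ∧ (∑ ξ : V, f ξ) ≤ 1 ∧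
        y = Ffun p ξhat U W f} := by
    rintro y ⟨f, h1, h2, _, h4⟩
    exact ⟨f, h1, h2, h4⟩
  have hbddB : BddAbove {y : ℝ | ∃ f : V → ℝ, (∀ ξ : V, 0 ≤ f ξ) ∧ (∑ ξ : V, f ξ) ≤ 1 ∧
      (∀ ξ ξ' : V, treeDepth ξ = treeDepth ξ' → f ξ = f ξ') ∧ y = Ffun p ξhat U W f} :=
    hbddA.mono hsub
  have hAne : {y : ℝ | ∃ f : V → ℝ, (∀ ξ : V, 0 ≤ f ξ) ∧ (∑ ξ : V, f ξ) ≤ 1 ∧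
      y = Ffun p ξhat U W f}.Nonempty :=
    ⟨Ffun p ξhat U W (fun _ => 0), ⟨fun _ => 0, fun _ => le_rfl, by simp, rfl⟩⟩
  have hBne : {y : ℝ | ∃ f : V → ℝ, (∀ ξ : V, 0 ≤ f ξ) ∧ (∑ ξ : V, f ξ) ≤ 1 ∧
      (∀ ξ ξ' : V, treeDepth ξ = treeDepth ξ' → f ξ = f ξ') ∧ y = Ffun p ξhat U W f}.Nonempty :=
    ⟨Ffun p ξhat U W (fun _ => 0), ⟨fun _ => 0, fun _ => le_rfl, by simp, fun _ _ _ => rfl, rfl⟩⟩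
  refine le_antisymm ?_ (csSup_le_csSup hbddA hBne hsub)
  refine csSup_le hAne ?_
  rintro y ⟨f, hf, hfsum, rfl⟩
  -- the level-averaged function
  set fbar : V → ℝ := fun ξ =>
    (∑ η ∈ levSet V (treeDepth ξ), f η) / ((levSet V (treeDepth ξ)).card : ℝ) with hfbardef
  have hS0 : ∀ i : ℕ, 0 ≤ ∑ η ∈ levSet V i, f η :=
    fun i => Finset.sum_nonneg fun η _ => hf η
  have hfbar0 : ∀ ξ : V, 0 ≤ fbar ξ := fun ξ => div_nonneg (hS0 _) (Nat.cast_nonneg _)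
  have hfbarconst : ∀ ξ ξ' : V, treeDepth ξ = treeDepth ξ' → fbar ξ = fbar ξ' := by
    intro ξ ξ' h
    simp only [hfbardef, h]
  have hfbarsum : ∑ ξ : V, fbar ξ = ∑ ξ : V, f ξ := by
    rw [sum_level_fiber fbar, sum_level_fiber f]
    refine Finset.sum_congr rfl fun j hj => ?_
    obtain ⟨ξ₀, -, hξ₀⟩ := Finset.mem_image.mp hj
    have hne : (levSet V j).Nonempty := ⟨ξ₀, mem_levSet.mpr hξ₀⟩
    have hcar : ((levSet V j).card : ℝ) ≠ 0 := by
      exact_mod_cast (Finset.card_pos.mpr hne).ne'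
    calc ∑ ξ ∈ levSet V j, fbar ξ
        = ∑ ξ ∈ levSet V j, (∑ η ∈ levSet V j, f η) / ((levSet V j).card : ℝ) := by
          refine Finset.sum_congr rfl fun ξ hξ => ?_
          rw [hfbardef]
          simp only
          rw [mem_levSet.mp hξ]
      _ = ((levSet V j).card : ℝ) * ((∑ η ∈ levSet V j, f η) / ((levSet V j).card : ℝ)) := by
          rw [Finset.sum_const, nsmul_eq_mul]
      _ = ∑ η ∈ levSet V j, f η := by field_simp
  -- main inequality F f ≤ F fbar
  have hmain : Ffun p ξhat U W f ≤ Ffun p ξhat U W fbar := by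
    rw [show Ffun p ξhat U W f = ∑ ξ : V, W (treeDepth ξ) ^ p *
        (∑ ξ' ∈ Finset.univ.filter (fun ξ' : V => ξhat ≤ ξ' ∧ ξ' ≤ ξ),
          U (treeDepth ξ') * f ξ' ^ (1 / p)) ^ p from rfl,
      show Ffun p ξhat U W fbar = ∑ ξ : V, W (treeDepth ξ) ^ p *
        (∑ ξ' ∈ Finset.univ.filter (fun ξ' : V => ξhat ≤ ξ' ∧ ξ' ≤ ξ),
          U (treeDepth ξ') * fbar ξ' ^ (1 / p)) ^ p from rfl,
      sum_level_fiber (fun ξ : V => W (treeDepth ξ) ^ p *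
        (∑ ξ' ∈ Finset.univ.filter (fun ξ' : V => ξhat ≤ ξ' ∧ ξ' ≤ ξ),
          U (treeDepth ξ') * f ξ' ^ (1 / p)) ^ p),
      sum_level_fiber (fun ξ : V => W (treeDepth ξ) ^ p *
        (∑ ξ' ∈ Finset.univ.filter (fun ξ' : V => ξhat ≤ ξ' ∧ ξ' ≤ ξ),
          U (treeDepth ξ') * fbar ξ' ^ (1 / p)) ^ p)]
    refine Finset.sum_le_sum fun j hj => ?_
    obtain ⟨ξ₀, -, hξ₀⟩ := Finset.mem_image.mp hj
    have hlevne : (levSet V j).Nonempty := ⟨ξ₀, mem_levSet.mpr hξ₀⟩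
    have hNpos : ∀ i : ℕ, i ≤ j → 0 < ((levSet V i).card : ℝ) := by
      intro i hij
      have h1 : i ≤ treeDepth ξ₀ := by omega
      have h2 : tanc ξ₀ i ∈ levSet V i := mem_levSet.mpr (tanc_spec hch h1).2
      exact_mod_cast Finset.card_pos.mpr ⟨_, h2⟩
    -- pull out the weight W j
    have hWterm : ∀ g : V → ℝ, ∑ ξ ∈ levSet V j, W (treeDepth ξ) ^ p *
        (∑ η ∈ Finset.univ.filter (fun η : V => ξhat ≤ η ∧ η ≤ ξ),
          U (treeDepth η) * g η ^ (1 / p)) ^ p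
        = W j ^ p * ∑ ξ ∈ levSet V j,
          (∑ η ∈ Finset.univ.filter (fun η : V => ξhat ≤ η ∧ η ≤ ξ),
            U (treeDepth η) * g η ^ (1 / p)) ^ p := by
      intro g
      rw [Finset.mul_sum]
      exact Finset.sum_congr rfl fun ξ hξ => by rw [mem_levSet.mp hξ]
    rw [hWterm f, hWterm fbar]
    refine mul_le_mul_of_nonneg_left ?_ (Real.rpow_nonneg (hW j).le _)
    -- rewrite inner (chain) sums via the ancestor enumeration
    have hchain_sum : ∀ (g : V → ℝ) (ξ : V), ξ ∈ levSet V j →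
        ∑ η ∈ Finset.univ.filter (fun η : V => ξhat ≤ η ∧ η ≤ ξ), g η
          = ∑ i ∈ Finset.range (j + 1), g (tanc ξ i) := by
      intro g ξ hξ
      have hdξ : treeDepth ξ = j := mem_levSet.mp hξ
      have hfil : Finset.univ.filter (fun η : V => ξhat ≤ η ∧ η ≤ ξ)
          = Finset.univ.filter (fun η : V => η ≤ ξ) := by
        apply Finset.filter_congr
        intro η _
        simp [hroot η]
      rw [hfil]
      refine Finset.sum_nbij' (i := fun η => treeDepth η) (j := fun i => tanc ξ i)
        ?_ ?_ ?_ ?_ ?_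
      · intro η hη
        simp only [Finset.mem_filter, Finset.mem_univ, true_and] at hη
        simp only [Finset.mem_range]
        have := treeDepth_le_of_le hη
        omega
      · intro i hi
        simp only [Finset.mem_range] at hi
        simp only [Finset.mem_filter, Finset.mem_univ, true_and]
        exact (tanc_spec hch (show i ≤ treeDepth ξ by omega)).1
      · intro η hη
        simp only [Finset.mem_filter, Finset.mem_univ, true_and] at hη
        exact tanc_eq hch hη
      · intro i hi
        simp only [Finset.mem_range] at hi
        exact (tanc_spec hch (show i ≤ treeDepth ξ by omega)).2
      · intro η hη
        simp only [Finset.mem_filter, Finset.mem_univ, true_and] at hη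
        rw [tanc_eq hch hη]
    -- the counting lemma at the real-number level
    have hcnt : ∀ (η η' : V), treeDepth η = treeDepth η' →
        (Finset.univ.filter fun ξ : V => η ≤ ξ ∧ treeDepth ξ = j).card =
        (Finset.univ.filter fun ξ : V => η' ≤ ξ ∧ treeDepth ξ = j).card := by
      intro η η' hd
      rcases le_or_gt (treeDepth η) j with h | h
      · obtain ⟨n, rfl⟩ := Nat.exists_eq_add_of_le h
        have h2 := cnt_const hch hregF n η η' hd
        rwa [← hd] at h2
      · have hemp : ∀ μ : V, treeDepth μ = treeDepth η →
            (Finset.univ.filter fun ξ : V => μ ≤ ξ ∧ treeDepth ξ = j) = ∅ := by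
          intro μ hμ
          rw [Finset.filter_eq_empty_iff]
          rintro ξ - ⟨hle, hdξ⟩
          have := treeDepth_le_of_le hle
          omega
        rw [hemp η rfl, hemp η' hd.symm]
    have hcount : ∀ i : ℕ, i ≤ j → ∀ g : V → ℝ,
        ((levSet V i).card : ℝ) * ∑ ξ ∈ levSet V j, g (tanc ξ i)
          = ((levSet V j).card : ℝ) * ∑ η ∈ levSet V i, g η := by
      intro i hij g
      have hfib : ∀ g : V → ℝ, ∑ ξ ∈ levSet V j, g (tanc ξ i)
          = ∑ η ∈ levSet V i,
              ((Finset.univ.filter fun ξ : V => η ≤ ξ ∧ treeDepth ξ = j).card : ℝ) * g η := by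
        intro g
        rw [← Finset.sum_fiberwise_of_maps_to (g := fun ξ : V => tanc ξ i) (t := levSet V i)
          ?_ (fun ξ => g (tanc ξ i))]
        · refine Finset.sum_congr rfl fun η hη => ?_
          have hdη : treeDepth η = i := mem_levSet.mp hη
          have hset : (levSet V j).filter (fun ξ => tanc ξ i = η)
              = Finset.univ.filter fun ξ : V => η ≤ ξ ∧ treeDepth ξ = j := by
            ext ξ
            simp only [levSet, Finset.mem_filter, Finset.mem_univ, true_and]
            constructor
            · rintro ⟨hdξ, htanc⟩
              have hsp := tanc_spec hch (ξ := ξ) (i := i) (by omega)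
              rw [htanc] at hsp
              exact ⟨hsp.1, hdξ⟩
            · rintro ⟨hle, hdξ⟩
              refine ⟨hdξ, ?_⟩
              have h0 := tanc_eq hch hle
              rw [hdη] at h0
              exact h0
          calc ∑ ξ ∈ (levSet V j).filter (fun ξ => tanc ξ i = η), g (tanc ξ i)
              = ∑ ξ ∈ (levSet V j).filter (fun ξ => tanc ξ i = η), g η :=
                Finset.sum_congr rfl fun ξ hξ => by rw [(Finset.mem_filter.mp hξ).2]
            _ = (((levSet V j).filter (fun ξ => tanc ξ i = η)).card : ℝ) * g η := by
                rw [Finset.sum_const, nsmul_eq_mul]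
            _ = _ := by rw [hset]
        · intro ξ hξ
          have hdξ : treeDepth ξ = j := mem_levSet.mp hξ
          exact mem_levSet.mpr (tanc_spec hch (show i ≤ treeDepth ξ by omega)).2
      have hcard : ((levSet V j).card : ℝ)
          = ∑ η ∈ levSet V i,
              ((Finset.univ.filter fun ξ : V => η ≤ ξ ∧ treeDepth ξ = j).card : ℝ) := by
        have h1 := hfib (fun _ => (1 : ℝ))
        simpa using h1
      obtain ⟨η₀, hη₀⟩ := Finset.card_pos.mp (by exact_mod_cast hNpos i hij)
      have hcnteq : ∀ η ∈ levSet V i,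
          ((Finset.univ.filter fun ξ : V => η ≤ ξ ∧ treeDepth ξ = j).card : ℝ)
            = ((Finset.univ.filter fun ξ : V => η₀ ≤ ξ ∧ treeDepth ξ = j).card : ℝ) := by
        intro η hη
        have hdd : treeDepth η = treeDepth η₀ := by
          rw [mem_levSet.mp hη, mem_levSet.mp hη₀]
        exact_mod_cast hcnt η η₀ hdd
      rw [hfib g, hcard]
      calc ((levSet V i).card : ℝ) *
            ∑ η ∈ levSet V i,
              ((Finset.univ.filter fun ξ : V => η ≤ ξ ∧ treeDepth ξ = j).card : ℝ) * g η
          = ∑ η' ∈ levSet V i, ∑ η ∈ levSet V i,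
              ((Finset.univ.filter fun ξ : V => η ≤ ξ ∧ treeDepth ξ = j).card : ℝ) * g η := by
            rw [Finset.sum_const, nsmul_eq_mul]
        _ = ∑ η' ∈ levSet V i, ∑ η ∈ levSet V i,
              ((Finset.univ.filter fun ξ : V => η' ≤ ξ ∧ treeDepth ξ = j).card : ℝ) * g η := by
            refine Finset.sum_congr rfl fun η' hη' => Finset.sum_congr rfl fun η hη => ?_
            rw [hcnteq η hη, hcnteq η' hη']
        _ = (∑ η' ∈ levSet V i,
              ((Finset.univ.filter fun ξ : V => η' ≤ ξ ∧ treeDepth ξ = j).card : ℝ)) *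
            ∑ η ∈ levSet V i, g η := by
            rw [Finset.sum_mul]
            exact Finset.sum_congr rfl fun η' _ => (Finset.mul_sum _ _ _).symm
    -- the common level-constant value of the inner sum for fbar
    have hT0 : 0 ≤ ∑ i ∈ Finset.range (j + 1),
        U i * ((∑ η ∈ levSet V i, f η) / ((levSet V i).card : ℝ)) ^ (1 / p) :=
      Finset.sum_nonneg fun i _ => mul_nonneg (hU i).le
        (Real.rpow_nonneg (div_nonneg (hS0 i) (Nat.cast_nonneg _)) _)
    calc ∑ ξ ∈ levSet V j,
          (∑ η ∈ Finset.univ.filter (fun η : V => ξhat ≤ η ∧ η ≤ ξ),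
            U (treeDepth η) * f η ^ (1 / p)) ^ p
        = ∑ ξ ∈ levSet V j,
            (∑ i ∈ Finset.range (j + 1), U i * f (tanc ξ i) ^ (1 / p)) ^ p := by
          refine Finset.sum_congr rfl fun ξ hξ => ?_
          rw [hchain_sum (fun η => U (treeDepth η) * f η ^ (1 / p)) ξ hξ]
          congr 1
          refine Finset.sum_congr rfl fun i hi => ?_
          simp only [Finset.mem_range] at hi
          have hdξ : treeDepth ξ = j := mem_levSet.mp hξ
          rw [(tanc_spec hch (show i ≤ treeDepth ξ by omega)).2]
      _ ≤ (∑ i ∈ Finset.range (j + 1),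
            U i * (∑ ξ ∈ levSet V j, f (tanc ξ i)) ^ (1 / p)) ^ p :=
          key_real hp.le (levSet V j) (Finset.range (j + 1)) U (fun i => (hU i).le)
            (fun i ξ => f (tanc ξ i)) (fun i ξ => hf _)
      _ = (∑ i ∈ Finset.range (j + 1),
            U i * (((levSet V j).card : ℝ) *
              ((∑ η ∈ levSet V i, f η) / ((levSet V i).card : ℝ))) ^ (1 / p)) ^ p := by
          congr 1
          refine Finset.sum_congr rfl fun i hi => ?_
          simp only [Finset.mem_range] at hi
          have hij : i ≤ j := by omega
          have hc := hcount i hij f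
          have hNine : ((levSet V i).card : ℝ) ≠ 0 := (hNpos i hij).ne'
          congr 1
          congr 1
          field_simp
          linear_combination hc
      _ = ((levSet V j).card : ℝ) *
            (∑ i ∈ Finset.range (j + 1),
              U i * ((∑ η ∈ levSet V i, f η) / ((levSet V i).card : ℝ)) ^ (1 / p)) ^ p := by
          have hterm : ∀ i ∈ Finset.range (j + 1),
              U i * (((levSet V j).card : ℝ) *
                ((∑ η ∈ levSet V i, f η) / ((levSet V i).card : ℝ))) ^ (1 / p)
              = ((levSet V j).card : ℝ) ^ (1 / p) *
                (U i * ((∑ η ∈ levSet V i, f η) / ((levSet V i).card : ℝ)) ^ (1 / p)) := by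
            intro i hi
            rw [Real.mul_rpow (Nat.cast_nonneg _) (div_nonneg (hS0 i) (Nat.cast_nonneg _))]
            ring
          rw [Finset.sum_congr rfl hterm, ← Finset.mul_sum,
            Real.mul_rpow (Real.rpow_nonneg (Nat.cast_nonneg _) _) hT0,
            ← Real.rpow_mul (Nat.cast_nonneg _), one_div_mul_cancel hp0.ne', Real.rpow_one]
      _ = ∑ ξ ∈ levSet V j,
            (∑ η ∈ Finset.univ.filter (fun η : V => ξhat ≤ η ∧ η ≤ ξ),
              U (treeDepth η) * fbar η ^ (1 / p)) ^ p := by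
          symm
          calc ∑ ξ ∈ levSet V j,
                (∑ η ∈ Finset.univ.filter (fun η : V => ξhat ≤ η ∧ η ≤ ξ),
                  U (treeDepth η) * fbar η ^ (1 / p)) ^ p
              = ∑ ξ ∈ levSet V j,
                (∑ i ∈ Finset.range (j + 1),
                  U i * ((∑ η ∈ levSet V i, f η) / ((levSet V i).card : ℝ)) ^ (1 / p)) ^ p := by
                refine Finset.sum_congr rfl fun ξ hξ => ?_
                rw [hchain_sum (fun η => U (treeDepth η) * fbar η ^ (1 / p)) ξ hξ]
                congr 1
                refine Finset.sum_congr rfl fun i hi => ?_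
                simp only [Finset.mem_range] at hi
                have hdξ : treeDepth ξ = j := mem_levSet.mp hξ
                have hsp := tanc_spec hch (ξ := ξ) (i := i)
                  (show i ≤ treeDepth ξ by omega)
                rw [hfbardef]
                simp only
                rw [hsp.2]
            _ = ((levSet V j).card : ℝ) *
                (∑ i ∈ Finset.range (j + 1),
                  U i * ((∑ η ∈ levSet V i, f η) / ((levSet V i).card : ℝ)) ^ (1 / p)) ^ p := by
                rw [Finset.sum_const, nsmul_eq_mul]
  refine le_trans hmain (le_csSup hbddB ?_)
  exact ⟨fbar, hfbar0, by rw [hfbarsum]; exact hfsum, hfbarconst, rfl⟩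
end
end
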